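/- arXiv:2306.10784 — 5 statements merged into one kernel-verified Lean document; each statement's English description precedes it below -/
import Mathlib

section
/- If D is a 4-Ore digraph different from the bidirected K4, and T is a copy of the bidirected K3 in D, then D contains either an Ore-collapsible induced subdigraph disjoint from T or an emerald disjoint from T. -/
/-- A (finite) digraph on vertices drawn from `ℕ`. -/
structure Dgr where
  verts : Finset ℕ
  Adj : ℕ → ℕ → Prop
  adj_mem : ∀ ⦃u v : ℕ⦄, Adj u v → u ∈ verts ∧ v ∈ verts
  adj_irrefl : ∀ v, ¬ Adj v v

namespace Dgr

/-- number of vertices -/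
def nV (D : Dgr) : ℕ := D.verts.card

/-- number of arcs -/
noncomputable def nA (D : Dgr) : ℕ := {p : ℕ × ℕ | D.Adj p.1 p.2}.ncard

/-- subdigraph relation -/
def Subd (H D : Dgr) : Prop := H.verts ⊆ D.verts ∧ ∀ ⦃u v : ℕ⦄, H.Adj u v → D.Adj u v

def ProperSubd (H D : Dgr) : Prop := Subd H D ∧ ¬ Subd D H

/-- a relation is acyclic: no directed cycle through any vertex -/
def Acy (R : ℕ → ℕ → Prop) : Prop := ∀ v, ¬ Relation.TransGen R v v

/-- a `k`-dicolouring: each colour class induces an acyclic subdigraph -/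
def IsDicol (D : Dgr) {k : ℕ} (φ : ℕ → Fin k) : Prop :=
  Acy (fun u v => D.Adj u v ∧ φ u = φ v)

def Dicolourable (D : Dgr) (k : ℕ) : Prop := ∃ φ : ℕ → Fin k, D.IsDicol φ

/-- the dichromatic number -/
noncomputable def dichr (D : Dgr) : ℕ := sInf {k | D.Dicolourable k}

/-- `k`-dicritical digraphs -/
def Dicritical (k : ℕ) (D : Dgr) : Prop :=
  D.dichr = k ∧ ∀ H : Dgr, ProperSubd H D → H.dichr < k

def Bidirected (D : Dgr) : Prop := ∀ ⦃u v : ℕ⦄, D.Adj u v → D.Adj v u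

def Oriented (D : Dgr) : Prop := ∀ ⦃u v : ℕ⦄, D.Adj u v → ¬ D.Adj v u

/-- being a bidirected complete digraph on `n` vertices -/
def IsBidirComplete (n : ℕ) (D : Dgr) : Prop :=
  D.verts.card = n ∧ ∀ u ∈ D.verts, ∀ v ∈ D.verts, u ≠ v → D.Adj u v

/-- a packing of digons (2-sets) and bidirected triangles (3-sets) -/
def IsPacking (D : Dgr) (P : Finset (Finset ℕ)) : Prop :=
  (∀ s ∈ P, (s.card = 2 ∨ s.card = 3) ∧ s ⊆ D.verts ∧
      ∀ u ∈ s, ∀ v ∈ s, u ≠ v → D.Adj u v) ∧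
  (P : Set (Finset ℕ)).Pairwise Disjoint

/-- `T(D)`: the maximum of `d + 2t` over packings of `d` digons and `t` bidirected
triangles; a digon contributes `card - 1 = 1`, a triangle `card - 1 = 2`. -/
noncomputable def TT (D : Dgr) : ℕ :=
  sSup {t | ∃ P : Finset (Finset ℕ), D.IsPacking P ∧ t = ∑ s ∈ P, (s.card - 1)}

/-- vertex deletion -/
def del (D : Dgr) (x : ℕ) : Dgr where
  verts := D.verts.erase x
  Adj u v := D.Adj u v ∧ u ≠ x ∧ v ≠ x
  adj_mem := by
    intro u v h
    exact ⟨Finset.mem_erase.2 ⟨h.2.1, (D.adj_mem h.1).1⟩,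
           Finset.mem_erase.2 ⟨h.2.2, (D.adj_mem h.1).2⟩⟩
  adj_irrefl := fun v h => D.adj_irrefl v h.1

/-- induced subdigraph on a set `S` of vertices -/
def induce (D : Dgr) (S : Finset ℕ) : Dgr where
  verts := D.verts ∩ S
  Adj u v := D.Adj u v ∧ u ∈ S ∧ v ∈ S
  adj_mem := by
    intro u v h
    exact ⟨Finset.mem_inter.2 ⟨(D.adj_mem h.1).1, h.2.1⟩,
           Finset.mem_inter.2 ⟨(D.adj_mem h.1).2, h.2.2⟩⟩
  adj_irrefl := fun v h => D.adj_irrefl v h.1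

/-- adding a digon between two (distinct, existing) vertices -/
def addDigon (D : Dgr) (x y : ℕ) : Dgr where
  verts := D.verts
  Adj u v := D.Adj u v ∨
    (x ≠ y ∧ x ∈ D.verts ∧ y ∈ D.verts ∧ ((u = x ∧ v = y) ∨ (u = y ∧ v = x)))
  adj_mem := by
    intro u v h
    rcases h with h | ⟨_, hx, hy, h | h⟩
    · exact D.adj_mem h
    · exact ⟨h.1 ▸ hx, h.2 ▸ hy⟩
    · exact ⟨h.1 ▸ hy, h.2 ▸ hx⟩
  adj_irrefl := by
    intro v h
    rcases h with h | ⟨hxy, _, _, h | h⟩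
    · exact D.adj_irrefl v h
    · exact hxy (h.1.symm.trans h.2)
    · exact hxy (h.2.symm.trans h.1)

/-- removing the digon `[x,y]` (both arcs) -/
def delDigon (D : Dgr) (x y : ℕ) : Dgr where
  verts := D.verts
  Adj u v := D.Adj u v ∧ ¬(u = x ∧ v = y) ∧ ¬(u = y ∧ v = x)
  adj_mem := by intro u v h; exact D.adj_mem h.1
  adj_irrefl := fun v h => D.adj_irrefl v h.1

/-- `D` is an Ore-composition of `D1` (digon side, replaced digon `[x,y]`) and
`D2` (split side, split vertex `z`). -/
def IsOreComp (D1 D2 D : Dgr) : Prop :=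
  Bidirected D1 ∧ Bidirected D2 ∧ Disjoint D1.verts D2.verts ∧
  ∃ (x y z : ℕ) (Z1 Z2 : Set ℕ),
    x ∈ D1.verts ∧ y ∈ D1.verts ∧ x ≠ y ∧ D1.Adj x y ∧
    z ∈ D2.verts ∧
    Z1 ∪ Z2 = {w | D2.Adj z w} ∧ Disjoint Z1 Z2 ∧ Z1.Nonempty ∧ Z2.Nonempty ∧
    D.verts = D1.verts ∪ D2.verts.erase z ∧
    (∀ u v, D.Adj u v ↔
      (D1.Adj u v ∧ ¬(u = x ∧ v = y) ∧ ¬(u = y ∧ v = x)) ∨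
      (D2.Adj u v ∧ u ≠ z ∧ v ≠ z) ∨
      (u = x ∧ v ∈ Z1 ∧ D2.Adj z v) ∨ (v = x ∧ u ∈ Z1 ∧ D2.Adj u z) ∨
      (u = y ∧ v ∈ Z2 ∧ D2.Adj z v) ∨ (v = y ∧ u ∈ Z2 ∧ D2.Adj u z))

/-- degree of a vertex: in-degree plus out-degree -/
noncomputable def deg (D : Dgr) (v : ℕ) : ℕ :=
  {u | D.Adj v u}.ncard + {u | D.Adj u v}.ncard

end Dgr

open Dgr

/-- the class of 4-Ore digraphs -/
inductive IsOre4 : Dgr → Prop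
  | k4 : ∀ D : Dgr, IsBidirComplete 4 D → IsOre4 D
  | comp : ∀ D1 D2 D : Dgr, IsOre4 D1 → IsOre4 D2 → IsOreComp D1 D2 D → IsOre4 D

namespace Dgr

/-- an emerald: a bidirected triangle all of whose vertices have degree 6 in `D` -/
def IsEmerald (D : Dgr) (s : Finset ℕ) : Prop :=
  s.card = 3 ∧ s ⊆ D.verts ∧ (∀ u ∈ s, ∀ v ∈ s, u ≠ v → D.Adj u v) ∧
  ∀ v ∈ s, D.deg v = 6

/-- a diamond: a bidirected `K4` minus a digon `[x,y]`, the two other vertices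
having degree 6 in `D` -/
def IsDiamond (D : Dgr) (s : Finset ℕ) : Prop :=
  s.card = 4 ∧ s ⊆ D.verts ∧ ∃ x ∈ s, ∃ y ∈ s, x ≠ y ∧
    (∀ u ∈ s, ∀ v ∈ s, u ≠ v → ¬(u = x ∧ v = y) → ¬(u = y ∧ v = x) → D.Adj u v) ∧
    (∀ v ∈ s, v ≠ x → v ≠ y → D.deg v = 6)

/-- boundary of an induced subdigraph given by its vertex set `S` -/
def bdry (D : Dgr) (S : Finset ℕ) : Set ℕ :=
  {v | v ∈ S ∧ ∃ u ∈ D.verts, u ∉ S ∧ (D.Adj u v ∨ D.Adj v u)}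

/-- Ore-collapsible induced subdigraph, given by its vertex set -/
def OreCollapsible (D : Dgr) (S : Finset ℕ) : Prop :=
  S ⊆ D.verts ∧ S.card < D.verts.card ∧
  ∃ u v : ℕ, u ≠ v ∧ D.bdry S = {u, v} ∧ IsOre4 ((D.induce S).addDigon u v)

/-- the potential of a digraph, with respect to parameters ε and δ -/
noncomputable def pot (D : Dgr) (ε δ : ℝ) : ℝ :=
  (10/3 + ε) * (D.nV : ℝ) - (D.nA : ℝ) - δ * (D.TT : ℝ)

end Dgr

namespace OreAux

open Dgr

lemma dgr_ext {A B : Dgr} (hv : A.verts = B.verts) (ha : A.Adj = B.Adj) : A = B := by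
  cases A; cases B; cases hv; cases ha; rfl


lemma outset_finite (A : Dgr) (v : ℕ) : {u | A.Adj v u}.Finite :=
  A.verts.finite_toSet.subset (fun u hu => (A.adj_mem hu).2)

lemma inset_eq_outset {A : Dgr} (hA : Bidirected A) (v : ℕ) :
    {u | A.Adj u v} = {u | A.Adj v u} :=
  Set.ext fun _ => ⟨fun hu => hA hu, fun hu => hA hu⟩

lemma deg_congr {A B : Dgr} (hA : Bidirected A) (hB : Bidirected B) (v : ℕ)
    (hout : {u | A.Adj v u}.ncard = {u | B.Adj v u}.ncard) : A.deg v = B.deg v := by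
  unfold Dgr.deg
  rw [inset_eq_outset hA, inset_eq_outset hB, hout]

lemma k4_bidir {E : Dgr} (hE : IsBidirComplete 4 E) : Bidirected E :=
  fun u v a => hE.2 v (E.adj_mem a).2 u (E.adj_mem a).1 (fun e => E.adj_irrefl u (e ▸ a))

lemma k4_outset {E : Dgr} (hE : IsBidirComplete 4 E) {v : ℕ} (hv : v ∈ E.verts) :
    {u | E.Adj v u} = ↑(E.verts.erase v) := by
  ext u
  constructor
  · intro ha
    exact Finset.mem_coe.2 (Finset.mem_erase.2
      ⟨fun e => E.adj_irrefl v (e ▸ ha), (E.adj_mem ha).2⟩)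
  · intro hu
    obtain ⟨hne, hmem⟩ := Finset.mem_erase.1 (Finset.mem_coe.1 hu)
    exact hE.2 v hv u hmem (fun e => hne e.symm)

lemma k4_deg {E : Dgr} (hE : IsBidirComplete 4 E) {v : ℕ} (hv : v ∈ E.verts) :
    E.deg v = 6 := by
  unfold Dgr.deg
  rw [inset_eq_outset (k4_bidir hE), k4_outset hE hv, Set.ncard_coe_finset,
    Finset.card_erase_of_mem hv, hE.1]

lemma k4_emerald {E : Dgr} (hE : IsBidirComplete 4 E) {v : ℕ} (hv : v ∈ E.verts) :
    E.IsEmerald (E.verts.erase v) := by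
  refine ⟨?_, Finset.erase_subset _ _, ?_, ?_⟩
  · rw [Finset.card_erase_of_mem hv, hE.1]
  · intro a ha b hb hab
    exact hE.2 a (Finset.mem_of_mem_erase ha) b (Finset.mem_of_mem_erase hb) hab
  · intro a ha
    exact k4_deg hE (Finset.mem_of_mem_erase ha)

/-- bundled data of an Ore composition -/
structure CD (D1 D2 D : Dgr) (x y z : ℕ) (Z1 Z2 : Set ℕ) : Prop where
  bd1 : Bidirected D1
  bd2 : Bidirected D2
  disj : Disjoint D1.verts D2.verts
  hx : x ∈ D1.verts
  hy : y ∈ D1.verts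
  hxy : x ≠ y
  hdig : D1.Adj x y
  hz : z ∈ D2.verts
  hZ : Z1 ∪ Z2 = {w | D2.Adj z w}
  hZd : Disjoint Z1 Z2
  hZ1 : Z1.Nonempty
  hZ2 : Z2.Nonempty
  hverts : D.verts = D1.verts ∪ D2.verts.erase z
  hadj : ∀ u v, D.Adj u v ↔
      (D1.Adj u v ∧ ¬(u = x ∧ v = y) ∧ ¬(u = y ∧ v = x)) ∨
      (D2.Adj u v ∧ u ≠ z ∧ v ≠ z) ∨
      (u = x ∧ v ∈ Z1 ∧ D2.Adj z v) ∨ (v = x ∧ u ∈ Z1 ∧ D2.Adj u z) ∨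
      (u = y ∧ v ∈ Z2 ∧ D2.Adj z v) ∨ (v = y ∧ u ∈ Z2 ∧ D2.Adj u z)

lemma oreComp_iff {D1 D2 D : Dgr} :
    IsOreComp D1 D2 D ↔ ∃ x y z Z1 Z2, CD D1 D2 D x y z Z1 Z2 := by
  constructor
  · rintro ⟨b1, b2, dj, x, y, z, Z1, Z2, hx, hy, hxy, hdig, hz, hZ, hZd, hZ1, hZ2, hverts, hadj⟩
    exact ⟨x, y, z, Z1, Z2, ⟨b1, b2, dj, hx, hy, hxy, hdig, hz, hZ, hZd, hZ1, hZ2, hverts, hadj⟩⟩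
  · rintro ⟨x, y, z, Z1, Z2, h⟩
    exact ⟨h.bd1, h.bd2, h.disj, x, y, z, Z1, Z2, h.hx, h.hy, h.hxy, h.hdig, h.hz, h.hZ,
      h.hZd, h.hZ1, h.hZ2, h.hverts, h.hadj⟩

variable {D1 D2 D : Dgr} {x y z : ℕ} {Z1 Z2 : Set ℕ}

lemma CD.swap (h : CD D1 D2 D x y z Z1 Z2) : CD D1 D2 D y x z Z2 Z1 where
  bd1 := h.bd1
  bd2 := h.bd2
  disj := h.disj
  hx := h.hy
  hy := h.hx
  hxy := h.hxy.symm
  hdig := h.bd1 h.hdig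
  hz := h.hz
  hZ := (Set.union_comm _ _).trans h.hZ
  hZd := h.hZd.symm
  hZ1 := h.hZ2
  hZ2 := h.hZ1
  hverts := h.hverts
  hadj := fun u v => (h.hadj u v).trans (by
    constructor <;> rintro (⟨a, b, c⟩ | a | a | a | a | a) <;>
      first
        | exact Or.inl ⟨a, c, b⟩
        | exact Or.inr (Or.inl a)
        | exact Or.inr (Or.inr (Or.inl a))
        | exact Or.inr (Or.inr (Or.inr (Or.inl a)))
        | exact Or.inr (Or.inr (Or.inr (Or.inr (Or.inl a))))
        | exact Or.inr (Or.inr (Or.inr (Or.inr (Or.inr a)))))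

namespace CD

variable (h : CD D1 D2 D x y z Z1 Z2)

include h

lemma not_mem_D2 {a : ℕ} (ha : a ∈ D1.verts) : a ∉ D2.verts :=
  fun hb => Finset.disjoint_left.1 h.disj ha hb

lemma not_mem_D1 {a : ℕ} (ha : a ∈ D2.verts) : a ∉ D1.verts :=
  fun hb => Finset.disjoint_left.1 h.disj hb ha

lemma adj_z_of_Z1 {w : ℕ} (hw : w ∈ Z1) : D2.Adj z w := by
  have : w ∈ Z1 ∪ Z2 := Set.mem_union_left _ hw
  rwa [h.hZ] at this

lemma adj_z_of_Z2 {w : ℕ} (hw : w ∈ Z2) : D2.Adj z w := by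
  have : w ∈ Z1 ∪ Z2 := Set.mem_union_right _ hw
  rwa [h.hZ] at this

lemma memZ1 {w : ℕ} (hw : w ∈ Z1) : w ∈ D2.verts ∧ w ≠ z := by
  have := h.adj_z_of_Z1 hw
  exact ⟨(D2.adj_mem this).2, fun e => D2.adj_irrefl z (e ▸ this)⟩

lemma memZ2 {w : ℕ} (hw : w ∈ Z2) : w ∈ D2.verts ∧ w ≠ z :=
  h.swap.memZ1 hw

lemma z_not_mem_D : z ∉ D.verts := by
  rw [h.hverts]
  intro hz
  rcases Finset.mem_union.1 hz with h1 | h2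
  · exact h.not_mem_D2 h1 h.hz
  · exact (Finset.mem_erase.1 h2).1 rfl

lemma bdD : Bidirected D := by
  intro u v huv
  rw [h.hadj] at huv ⊢
  rcases huv with ⟨h1, h2, h3⟩ | ⟨h1, h2, h3⟩ | ⟨h1, h2, h3⟩ | ⟨h1, h2, h3⟩ | ⟨h1, h2, h3⟩ | ⟨h1, h2, h3⟩
  · exact Or.inl ⟨h.bd1 h1, by tauto, by tauto⟩
  · exact Or.inr (Or.inl ⟨h.bd2 h1, h3, h2⟩)
  · exact Or.inr (Or.inr (Or.inr (Or.inl ⟨h1, h2, h.bd2 h3⟩)))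
  · exact Or.inr (Or.inr (Or.inl ⟨h1, h2, h.bd2 h3⟩))
  · exact Or.inr (Or.inr (Or.inr (Or.inr (Or.inr ⟨h1, h2, h.bd2 h3⟩))))
  · exact Or.inr (Or.inr (Or.inr (Or.inr (Or.inl ⟨h1, h2, h.bd2 h3⟩))))

/-- adjacency inside `D1` -/
lemma adj_D1 {u v : ℕ} (hu : u ∈ D1.verts) (hv : v ∈ D1.verts) :
    D.Adj u v ↔ (D1.Adj u v ∧ ¬(u = x ∧ v = y) ∧ ¬(u = y ∧ v = x)) := by
  rw [h.hadj]
  constructor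
  · rintro (hh | ⟨h1, _, _⟩ | ⟨h1, h2, h3⟩ | ⟨h1, h2, h3⟩ | ⟨h1, h2, h3⟩ | ⟨h1, h2, h3⟩)
    · exact hh
    · exact absurd (D2.adj_mem h1).1 (h.not_mem_D2 hu)
    · exact absurd (h.memZ1 h2).1 (h.not_mem_D2 hv)
    · exact absurd (h.memZ1 h2).1 (h.not_mem_D2 hu)
    · exact absurd (h.memZ2 h2).1 (h.not_mem_D2 hv)
    · exact absurd (h.memZ2 h2).1 (h.not_mem_D2 hu)
  · exact fun hh => Or.inl hh

/-- adjacency inside `D2 - z` -/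
lemma adj_D2 {u v : ℕ} (hu : u ∈ D2.verts) (hv : v ∈ D2.verts) (huz : u ≠ z) (hvz : v ≠ z) :
    D.Adj u v ↔ D2.Adj u v := by
  rw [h.hadj]
  constructor
  · rintro (⟨h1, _, _⟩ | ⟨h1, _, _⟩ | ⟨h1, h2, h3⟩ | ⟨h1, h2, h3⟩ | ⟨h1, h2, h3⟩ | ⟨h1, h2, h3⟩)
    · exact absurd (D1.adj_mem h1).1 (h.not_mem_D1 hu)
    · exact h1
    · exact absurd h.hx (fun hxx => h.not_mem_D1 hu (h1 ▸ hxx))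
    · exact absurd h.hx (fun hxx => h.not_mem_D1 hv (h1 ▸ hxx))
    · exact absurd h.hy (fun hyy => h.not_mem_D1 hu (h1 ▸ hyy))
    · exact absurd h.hy (fun hyy => h.not_mem_D1 hv (h1 ▸ hyy))
  · exact fun hh => Or.inr (Or.inl ⟨hh, huz, hvz⟩)

/-- cross adjacency, from the `D1` side -/
lemma adj_cross {u v : ℕ} (hu : u ∈ D1.verts) (hv : v ∈ D2.verts) (hvz : v ≠ z) :
    D.Adj u v ↔ ((u = x ∧ v ∈ Z1) ∨ (u = y ∧ v ∈ Z2)) := by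
  rw [h.hadj]
  constructor
  · rintro (⟨h1, _, _⟩ | ⟨h1, _, _⟩ | ⟨h1, h2, h3⟩ | ⟨h1, h2, h3⟩ | ⟨h1, h2, h3⟩ | ⟨h1, h2, h3⟩)
    · exact absurd (D1.adj_mem h1).2 (h.not_mem_D1 hv)
    · exact absurd (D2.adj_mem h1).1 (h.not_mem_D2 hu)
    · exact Or.inl ⟨h1, h2⟩
    · exact absurd h.hx (fun hxx => h.not_mem_D1 hv (h1 ▸ hxx))
    · exact Or.inr ⟨h1, h2⟩
    · exact absurd h.hy (fun hyy => h.not_mem_D1 hv (h1 ▸ hyy))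
  · rintro (⟨h1, h2⟩ | ⟨h1, h2⟩)
    · exact Or.inr (Or.inr (Or.inl ⟨h1, h2, h.adj_z_of_Z1 h2⟩))
    · exact Or.inr (Or.inr (Or.inr (Or.inr (Or.inl ⟨h1, h2, h.adj_z_of_Z2 h2⟩))))

lemma not_adj_xy : ¬ D.Adj x y := by
  rw [h.adj_D1 h.hx h.hy]
  rintro ⟨-, h2, -⟩
  exact h2 ⟨rfl, rfl⟩


lemma outset_D1 {v : ℕ} (hv : v ∈ D1.verts) (hvx : v ≠ x) (hvy : v ≠ y) :
    {u | D.Adj v u} = {u | D1.Adj v u} := by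
  ext u
  constructor
  · intro hu
    rcases (h.hadj v u).1 hu with ⟨a, -, -⟩ | ⟨a, -, -⟩ | ⟨a, -, -⟩ | ⟨-, a, -⟩ | ⟨a, -, -⟩ | ⟨-, a, -⟩
    · exact a
    · exact absurd (D2.adj_mem a).1 (h.not_mem_D2 hv)
    · exact absurd a hvx
    · exact absurd (h.memZ1 a).1 (h.not_mem_D2 hv)
    · exact absurd a hvy
    · exact absurd (h.memZ2 a).1 (h.not_mem_D2 hv)
  · intro hu
    exact (h.hadj v u).2 (Or.inl ⟨hu, fun e => hvx e.1, fun e => hvy e.1⟩)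

lemma deg_D1 {v : ℕ} (hv : v ∈ D1.verts) (hvx : v ≠ x) (hvy : v ≠ y) :
    D.deg v = D1.deg v :=
  deg_congr h.bdD h.bd1 v (by rw [h.outset_D1 hv hvx hvy])

lemma outset_D2_Z1 {v : ℕ} (hv1 : v ∈ Z1) :
    {u | D.Adj v u} = insert x ({u | D2.Adj v u} \ {z}) := by
  ext u
  constructor
  · intro hu
    rcases (h.hadj v u).1 hu with ⟨a, -, -⟩ | ⟨a, b, c⟩ | ⟨a, -, -⟩ | ⟨a, -, -⟩ | ⟨a, -, -⟩ | ⟨-, a, -⟩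
    · exact absurd (D1.adj_mem a).1 (h.not_mem_D1 (h.memZ1 hv1).1)
    · exact Or.inr ⟨a, fun e => c e⟩
    · exact absurd (a ▸ h.hx) (h.not_mem_D1 (h.memZ1 hv1).1)
    · exact Or.inl a
    · exact absurd (a ▸ h.hy) (h.not_mem_D1 (h.memZ1 hv1).1)
    · exact absurd a (Set.disjoint_left.1 h.hZd hv1)
  · rintro (rfl | ⟨a, b⟩)
    · exact (h.hadj v u).2 (Or.inr (Or.inr (Or.inr (Or.inl ⟨rfl, hv1, h.bd2 (h.adj_z_of_Z1 hv1)⟩))))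
    · exact (h.hadj v u).2 (Or.inr (Or.inl ⟨a, (h.memZ1 hv1).2, fun e => b (e ▸ rfl)⟩))

lemma deg_D2_aux {v : ℕ} (hv : v ∈ D2.verts) (hvz : v ≠ z) (hv2 : v ∉ Z2) :
    D.deg v = D2.deg v := by
  refine deg_congr h.bdD h.bd2 v ?_
  by_cases hv1 : v ∈ Z1
  · rw [h.outset_D2_Z1 hv1]
    have hfin : {u | D2.Adj v u}.Finite := outset_finite D2 v
    have hzmem : z ∈ {u | D2.Adj v u} := h.bd2 (h.adj_z_of_Z1 hv1)
    have hxnot : x ∉ {u | D2.Adj v u} \ {z} :=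
      fun hmem => h.not_mem_D2 h.hx (D2.adj_mem hmem.1).2
    have hpos : 0 < {u | D2.Adj v u}.ncard := (Set.ncard_pos hfin).2 ⟨z, hzmem⟩
    rw [Set.ncard_insert_of_notMem hxnot hfin.diff,
      Set.ncard_diff_singleton_of_mem hzmem]
    omega
  · have : {u | D.Adj v u} = {u | D2.Adj v u} := by
      ext u
      constructor
      · intro hu
        rcases (h.hadj v u).1 hu with ⟨a, -, -⟩ | ⟨a, -, -⟩ | ⟨a, -, -⟩ | ⟨-, a, -⟩ | ⟨a, -, -⟩ | ⟨-, a, -⟩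
        · exact absurd (D1.adj_mem a).1 (h.not_mem_D1 hv)
        · exact a
        · exact absurd (a ▸ h.hx) (h.not_mem_D1 hv)
        · exact absurd a hv1
        · exact absurd (a ▸ h.hy) (h.not_mem_D1 hv)
        · exact absurd a hv2
      · intro hu
        have huz : u ≠ z := by
          rintro rfl
          have : v ∈ Z1 ∪ Z2 := by rw [h.hZ]; exact h.bd2 hu
          rcases this with hh | hh
          · exact hv1 hh
          · exact hv2 hh
        exact (h.hadj v u).2 (Or.inr (Or.inl ⟨hu, hvz, huz⟩))
    rw [this]

lemma deg_D2 {v : ℕ} (hv : v ∈ D2.verts) (hvz : v ≠ z) : D.deg v = D2.deg v := by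
  by_cases hv2 : v ∈ Z2
  · exact h.swap.deg_D2_aux hv hvz (Set.disjoint_left.1 h.hZd · hv2)
  · exact h.deg_D2_aux hv hvz hv2

lemma outset_y {w : ℕ} (hZ2s : Z2 = {w}) :
    {u | D.Adj y u} = insert w ({u | D1.Adj y u} \ {x}) := by
  have hwZ2 : w ∈ Z2 := hZ2s ▸ rfl
  ext u
  constructor
  · intro hu
    rcases (h.hadj y u).1 hu with ⟨a, b, c⟩ | ⟨a, -, -⟩ | ⟨a, -, -⟩ | ⟨-, a, -⟩ | ⟨-, a, -⟩ | ⟨a, b, -⟩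
    · exact Or.inr ⟨a, fun e => c ⟨rfl, e⟩⟩
    · exact absurd (D2.adj_mem a).1 (h.not_mem_D2 h.hy)
    · exact absurd a.symm h.hxy
    · exact absurd (h.memZ1 a).1 (h.not_mem_D2 h.hy)
    · exact Or.inl (by rw [hZ2s] at a; exact a)
    · exact absurd (h.memZ2 b).1 (h.not_mem_D2 h.hy)
  · rintro (rfl | ⟨a, b⟩)
    · exact (h.hadj y u).2 (Or.inr (Or.inr (Or.inr (Or.inr (Or.inl
        ⟨rfl, hwZ2, h.adj_z_of_Z2 hwZ2⟩)))))
    · exact (h.hadj y u).2 (Or.inl ⟨a, fun e => h.hxy e.1.symm, fun e => b (e.2 ▸ rfl)⟩)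

lemma deg_y {w : ℕ} (hZ2s : Z2 = {w}) : D.deg y = D1.deg y := by
  refine deg_congr h.bdD h.bd1 y ?_
  have hwZ2 : w ∈ Z2 := hZ2s ▸ rfl
  rw [h.outset_y hZ2s]
  have hfin : {u | D1.Adj y u}.Finite := outset_finite D1 y
  have hxmem : x ∈ {u | D1.Adj y u} := h.bd1 h.hdig
  have hwnot : w ∉ {u | D1.Adj y u} \ {x} :=
    fun hmem => h.not_mem_D1 (h.memZ2 hwZ2).1 (D1.adj_mem hmem.1).2
  have hpos : 0 < {u | D1.Adj y u}.ncard := (Set.ncard_pos hfin).2 ⟨x, hxmem⟩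
  rw [Set.ncard_insert_of_notMem hwnot hfin.diff,
    Set.ncard_diff_singleton_of_mem hxmem]
  omega


lemma D1_sub_D : D1.verts ⊆ D.verts := by
  rw [h.hverts]; exact Finset.subset_union_left

lemma D2_mem_D {w : ℕ} (hw : w ∈ D2.verts) (hwz : w ≠ z) : w ∈ D.verts := by
  rw [h.hverts]; exact Finset.mem_union_right _ (Finset.mem_erase.2 ⟨hwz, hw⟩)

lemma bdry_eq_D1 : D.bdry D1.verts = {x, y} := by
  ext v
  constructor
  · rintro ⟨hvS, u, huD, huS, hor⟩
    have huv : D.Adj v u := hor.elim (fun a => h.bdD a) id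
    have huerase : u ∈ D2.verts.erase z := by
      rw [h.hverts] at huD
      rcases Finset.mem_union.1 huD with hh | hh
      · exact absurd hh huS
      · exact hh
    obtain ⟨huz, hu2⟩ := Finset.mem_erase.1 huerase
    rcases (h.adj_cross hvS hu2 huz).1 huv with ⟨e, -⟩ | ⟨e, -⟩
    · exact Or.inl e
    · exact Or.inr e
  · rintro (rfl | rfl)
    · obtain ⟨w, hw⟩ := h.hZ1
      obtain ⟨hw2, hwz⟩ := h.memZ1 hw
      exact ⟨h.hx, w, h.D2_mem_D hw2 hwz, fun hc => h.not_mem_D2 hc hw2,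
        Or.inr ((h.adj_cross h.hx hw2 hwz).2 (Or.inl ⟨rfl, hw⟩))⟩
    · obtain ⟨w, hw⟩ := h.hZ2
      obtain ⟨hw2, hwz⟩ := h.memZ2 hw
      exact ⟨h.hy, w, h.D2_mem_D hw2 hwz, fun hc => h.not_mem_D2 hc hw2,
        Or.inr ((h.adj_cross h.hy hw2 hwz).2 (Or.inr ⟨rfl, hw⟩))⟩

lemma induce_addDigon_eq : (D.induce D1.verts).addDigon x y = D1 := by
  have hvertseq : (D.induce D1.verts).verts = D1.verts :=
    Finset.inter_eq_right.2 h.D1_sub_D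
  refine dgr_ext hvertseq ?_
  funext u v
  apply propext
  constructor
  · rintro (⟨hDa, hu1, hv1⟩ | ⟨-, -, -, (⟨rfl, rfl⟩ | ⟨rfl, rfl⟩)⟩)
    · exact ((h.adj_D1 hu1 hv1).1 hDa).1
    · exact h.hdig
    · exact h.bd1 h.hdig
  · intro ha
    have hu1 : u ∈ D1.verts := (D1.adj_mem ha).1
    have hv1 : v ∈ D1.verts := (D1.adj_mem ha).2
    by_cases hd : (u = x ∧ v = y) ∨ (u = y ∧ v = x)
    · refine Or.inr ⟨h.hxy, ?_, ?_, hd⟩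
      · rw [hvertseq]; exact h.hx
      · rw [hvertseq]; exact h.hy
    · exact Or.inl ⟨(h.adj_D1 hu1 hv1).2
        ⟨ha, fun e' => hd (Or.inl e'), fun e' => hd (Or.inr e')⟩, hu1, hv1⟩

lemma card_lt : D1.verts.card < D.verts.card := by
  have hdisj : Disjoint D1.verts (D2.verts.erase z) :=
    h.disj.mono_right (Finset.erase_subset _ _)
  obtain ⟨w, hw⟩ := h.hZ1
  obtain ⟨hw2, hwz⟩ := h.memZ1 hw
  have hpos : 0 < (D2.verts.erase z).card :=
    Finset.card_pos.2 ⟨w, Finset.mem_erase.2 ⟨hwz, hw2⟩⟩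
  rw [h.hverts, Finset.card_union_of_disjoint hdisj]
  omega

lemma collapsible_D1_verts (h1 : IsOre4 D1) : D.OreCollapsible D1.verts := by
  refine ⟨h.D1_sub_D, h.card_lt, x, y, h.hxy, h.bdry_eq_D1, ?_⟩
  rw [h.induce_addDigon_eq]
  exact h1

lemma emerald_D2 {e : Finset ℕ} (he : D2.IsEmerald e) (hze : z ∉ e) : D.IsEmerald e := by
  obtain ⟨hc, hs, hadje, hdeg⟩ := he
  refine ⟨hc, ?_, ?_, ?_⟩
  · exact fun v hv => h.D2_mem_D (hs hv) (fun e' => hze (e' ▸ hv))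
  · intro a ha b hb hab
    exact (h.adj_D2 (hs ha) (hs hb) (fun e' => hze (e' ▸ ha)) (fun e' => hze (e' ▸ hb))).2
      (hadje a ha b hb hab)
  · intro v hv
    rw [h.deg_D2 (hs hv) (fun e' => hze (e' ▸ hv))]
    exact hdeg v hv

lemma emerald_D1 {e : Finset ℕ} (he : D1.IsEmerald e) (hxe : x ∉ e)
    (hy : y ∈ e → D.deg y = D1.deg y) : D.IsEmerald e := by
  obtain ⟨hc, hs, hadje, hdeg⟩ := he
  refine ⟨hc, fun v hv => h.D1_sub_D (hs hv), ?_, ?_⟩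
  · intro a ha b hb hab
    exact (h.adj_D1 (hs ha) (hs hb)).2 ⟨hadje a ha b hb hab,
      fun e' => hxe (e'.1 ▸ ha), fun e' => hxe (e'.2 ▸ hb)⟩
  · intro v hv
    by_cases hvy : v = y
    · subst hvy
      rw [hy hv]
      exact hdeg v hv
    · rw [h.deg_D1 (hs hv) (fun e' => hxe (e' ▸ hv)) hvy]
      exact hdeg v hv

lemma collapsible_D2 {S : Finset ℕ} (hS : D2.OreCollapsible S) (hzS : z ∉ S) :
    D.OreCollapsible S := by
  obtain ⟨hsub2, hcard, u, v, huv, hbd, hore⟩ := hS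
  have hSD : S ⊆ D.verts := fun w hw => h.D2_mem_D (hsub2 hw) (fun e' => hzS (e' ▸ hw))
  have hxnotS : x ∉ S := fun hc => h.not_mem_D2 h.hx (hsub2 hc)
  have hynotS : y ∉ S := fun hc => h.not_mem_D2 h.hy (hsub2 hc)
  have hbdeq : D.bdry S = D2.bdry S := by
    ext v0
    constructor
    · rintro ⟨hv0, u0, hu0D, hu0S, hor⟩
      have ha : D.Adj v0 u0 := hor.elim (fun a => h.bdD a) id
      rcases (h.hadj v0 u0).1 ha with ⟨a, -, -⟩ | ⟨a, -, -⟩ | ⟨a, -, -⟩ | ⟨-, -, c⟩ |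
        ⟨a, -, -⟩ | ⟨-, -, c⟩
      · exact absurd (D1.adj_mem a).1 (h.not_mem_D1 (hsub2 hv0))
      · exact ⟨hv0, u0, (D2.adj_mem a).2, hu0S, Or.inr a⟩
      · exact absurd (a ▸ h.hx) (h.not_mem_D1 (hsub2 hv0))
      · exact ⟨hv0, z, h.hz, hzS, Or.inr c⟩
      · exact absurd (a ▸ h.hy) (h.not_mem_D1 (hsub2 hv0))
      · exact ⟨hv0, z, h.hz, hzS, Or.inr c⟩
    · rintro ⟨hv0, u0, hu0D2, hu0S, hor⟩
      have ha : D2.Adj v0 u0 := hor.elim (fun a => h.bd2 a) id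
      by_cases hu0z : u0 = z
      · subst hu0z
        have : v0 ∈ Z1 ∪ Z2 := by rw [h.hZ]; exact h.bd2 ha
        rcases this with hh | hh
        · exact ⟨hv0, x, h.D1_sub_D h.hx, hxnotS,
            Or.inr ((h.hadj v0 x).2 (Or.inr (Or.inr (Or.inr (Or.inl ⟨rfl, hh, ha⟩)))))⟩
        · exact ⟨hv0, y, h.D1_sub_D h.hy, hynotS,
            Or.inr ((h.hadj v0 y).2 (Or.inr (Or.inr (Or.inr (Or.inr (Or.inr ⟨rfl, hh, ha⟩))))))⟩
      · exact ⟨hv0, u0, h.D2_mem_D hu0D2 hu0z, hu0S,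
          Or.inr ((h.adj_D2 (hsub2 hv0) hu0D2 (fun e' => hzS (e' ▸ hv0)) hu0z).2 ha)⟩
  have hind : D.induce S = D2.induce S := by
    refine dgr_ext ?_ ?_
    · show D.verts ∩ S = D2.verts ∩ S
      rw [Finset.inter_eq_right.2 hSD, Finset.inter_eq_right.2 hsub2]
    · funext a b
      apply propext
      constructor
      · rintro ⟨ha, haS, hbS⟩
        exact ⟨(h.adj_D2 (hsub2 haS) (hsub2 hbS) (fun e' => hzS (e' ▸ haS))
          (fun e' => hzS (e' ▸ hbS))).1 ha, haS, hbS⟩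
      · rintro ⟨ha, haS, hbS⟩
        exact ⟨(h.adj_D2 (hsub2 haS) (hsub2 hbS) (fun e' => hzS (e' ▸ haS))
          (fun e' => hzS (e' ▸ hbS))).2 ha, haS, hbS⟩
  have hcardD : S.card < D.verts.card := by
    have hdisj : Disjoint D1.verts (D2.verts.erase z) :=
      h.disj.mono_right (Finset.erase_subset _ _)
    have h1pos : 0 < D1.verts.card := Finset.card_pos.2 ⟨x, h.hx⟩
    have hce : (D2.verts.erase z).card = D2.verts.card - 1 := Finset.card_erase_of_mem h.hz
    have h2pos : 0 < D2.verts.card := Finset.card_pos.2 ⟨z, h.hz⟩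
    rw [h.hverts, Finset.card_union_of_disjoint hdisj, hce]
    omega
  refine ⟨hSD, hcardD, u, v, huv, hbdeq.trans hbd, ?_⟩
  rw [hind]
  exact hore

lemma collapsible_D1 {S : Finset ℕ} (hS : D1.OreCollapsible S) (hxS : x ∉ S) :
    D.OreCollapsible S := by
  obtain ⟨hsub1, hcard, u, v, huv, hbd, hore⟩ := hS
  have hSD : S ⊆ D.verts := fun w hw => h.D1_sub_D (hsub1 hw)
  have hbdeq : D.bdry S = D1.bdry S := by
    ext v0
    constructor
    · rintro ⟨hv0, u0, hu0D, hu0S, hor⟩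
      have ha : D.Adj v0 u0 := hor.elim (fun a => h.bdD a) id
      rcases (h.hadj v0 u0).1 ha with ⟨a, -, -⟩ | ⟨a, -, -⟩ | ⟨a, -, -⟩ | ⟨-, a, -⟩ |
        ⟨a, -, -⟩ | ⟨-, a, -⟩
      · exact ⟨hv0, u0, (D1.adj_mem a).2, hu0S, Or.inr a⟩
      · exact absurd (D2.adj_mem a).1 (h.not_mem_D2 (hsub1 hv0))
      · exact absurd (a ▸ hv0) hxS
      · exact absurd (h.memZ1 a).1 (h.not_mem_D2 (hsub1 hv0))
      · subst a
        exact ⟨hv0, x, h.hx, hxS, Or.inr (h.bd1 h.hdig)⟩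
      · exact absurd (h.memZ2 a).1 (h.not_mem_D2 (hsub1 hv0))
    · rintro ⟨hv0, u0, hu0D1, hu0S, hor⟩
      have ha : D1.Adj v0 u0 := hor.elim (fun a => h.bd1 a) id
      by_cases hdg : v0 = y ∧ u0 = x
      · obtain ⟨w, hw⟩ := h.hZ2
        obtain ⟨hw2, hwz⟩ := h.memZ2 hw
        refine ⟨hv0, w, h.D2_mem_D hw2 hwz, fun hc => h.not_mem_D2 (hsub1 hc) hw2, Or.inr ?_⟩
        exact (h.hadj v0 w).2 (Or.inr (Or.inr (Or.inr (Or.inr (Or.inl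
          ⟨hdg.1, hw, h.adj_z_of_Z2 hw⟩)))))
      · have hnot1 : ¬(v0 = x ∧ u0 = y) := fun e' => hxS (e'.1 ▸ hv0)
        exact ⟨hv0, u0, h.D1_sub_D hu0D1, hu0S,
          Or.inr ((h.adj_D1 (hsub1 hv0) hu0D1).2 ⟨ha, hnot1, hdg⟩)⟩
  have hind : D.induce S = D1.induce S := by
    refine dgr_ext ?_ ?_
    · show D.verts ∩ S = D1.verts ∩ S
      rw [Finset.inter_eq_right.2 hSD, Finset.inter_eq_right.2 hsub1]
    · funext a b
      apply propext
      constructor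
      · rintro ⟨ha, haS, hbS⟩
        exact ⟨((h.adj_D1 (hsub1 haS) (hsub1 hbS)).1 ha).1, haS, hbS⟩
      · rintro ⟨ha, haS, hbS⟩
        exact ⟨(h.adj_D1 (hsub1 haS) (hsub1 hbS)).2
          ⟨ha, fun e' => hxS (e'.1 ▸ haS), fun e' => hxS (e'.2 ▸ hbS)⟩, haS, hbS⟩
  exact ⟨hSD, lt_trans hcard h.card_lt, u, v, huv, hbdeq.trans hbd, by rw [hind]; exact hore⟩

end CD

lemma lemA : ∀ E : Dgr, IsOre4 E → ¬ IsBidirComplete 4 E → ∀ z0 ∈ E.verts,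
    (∃ e, E.IsEmerald e ∧ z0 ∉ e) ∨ (∃ S, E.OreCollapsible S ∧ z0 ∉ S) := by
  intro E hE
  induction hE with
  | k4 E hK => exact fun hn => absurd hK hn
  | comp E1 E2 E h1 h2 hcomp IH1 IH2 =>
    intro _ z0 hz0
    obtain ⟨x', y', z', Z1', Z2', hc⟩ := oreComp_iff.1 hcomp
    by_cases hz01 : z0 ∈ E1.verts
    · by_cases hK2 : IsBidirComplete 4 E2
      · left
        exact ⟨E2.verts.erase z', hc.emerald_D2 (k4_emerald hK2 hc.hz) (Finset.notMem_erase _ _),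
          fun hmem => hc.not_mem_D2 hz01 (Finset.mem_of_mem_erase hmem)⟩
      · rcases IH2 hK2 z' hc.hz with ⟨e, he, hze⟩ | ⟨S, hS, hzS⟩
        · exact Or.inl ⟨e, hc.emerald_D2 he hze, fun hmem => hc.not_mem_D2 hz01 (he.2.1 hmem)⟩
        · exact Or.inr ⟨S, hc.collapsible_D2 hS hzS, fun hmem => hc.not_mem_D2 hz01 (hS.1 hmem)⟩
    · exact Or.inr ⟨E1.verts, hc.collapsible_D1_verts h1, hz01⟩

lemma CD.step (h : CD D1 D2 D x y z Z1 Z2) (h1 : IsOre4 D1)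
    (IH2 : ¬IsBidirComplete 4 D2 → ∀ t2 : Finset ℕ, t2.card = 3 → t2 ⊆ D2.verts →
      (∀ u ∈ t2, ∀ v ∈ t2, u ≠ v → D2.Adj u v) →
      (∃ S : Finset ℕ, D2.OreCollapsible S ∧ Disjoint S t2) ∨
      (∃ s : Finset ℕ, D2.IsEmerald s ∧ Disjoint s t2))
    {t : Finset ℕ} {b c0 : ℕ} (hb : b ∈ Z1) (hc0 : c0 ∈ Z1) (hbc : b ≠ c0)
    (hadjbc : D2.Adj b c0) (hadjcb : D2.Adj c0 b)
    (hteq : t = {x, b, c0}) :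
    (∃ S : Finset ℕ, D.OreCollapsible S ∧ Disjoint S t) ∨
    (∃ s : Finset ℕ, D.IsEmerald s ∧ Disjoint s t) := by
  obtain ⟨hb2, hbz⟩ := h.memZ1 hb
  obtain ⟨hc2, hcz⟩ := h.memZ1 hc0
  have hdisj_of : ∀ e : Finset ℕ, x ∉ e → b ∉ e → c0 ∉ e → Disjoint e t := by
    intro e hx' hb' hc'
    rw [hteq]
    refine Finset.disjoint_right.2 ?_
    intro a ha
    simp only [Finset.mem_insert, Finset.mem_singleton] at ha
    rcases ha with rfl | rfl | rfl <;> assumption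
  by_cases hK2 : IsBidirComplete 4 D2
  · -- D2 is the bidirected K4 : Z2 is a singleton
    obtain ⟨w3, hw3⟩ := h.hZ2
    obtain ⟨hw32, hw3z⟩ := h.memZ2 hw3
    have hZ2s : Z2 = {w3} := by
      refine Set.eq_singleton_iff_unique_mem.2 ⟨hw3, ?_⟩
      intro w' hw'
      by_contra hne
      obtain ⟨hw'2, hw'z⟩ := h.memZ2 hw'
      have hb_w3 : b ≠ w3 := fun e => Set.disjoint_left.1 h.hZd hb (e ▸ hw3)
      have hb_w' : b ≠ w' := fun e => Set.disjoint_left.1 h.hZd hb (e ▸ hw')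
      have hc_w3 : c0 ≠ w3 := fun e => Set.disjoint_left.1 h.hZd hc0 (e ▸ hw3)
      have hc_w' : c0 ≠ w' := fun e => Set.disjoint_left.1 h.hZd hc0 (e ▸ hw')
      have hw3w' : w3 ≠ w' := fun e => hne e.symm
      have hsub4 : ({b, c0, w3, w'} : Finset ℕ) ⊆ D2.verts.erase z := by
        intro w hw
        simp only [Finset.mem_insert, Finset.mem_singleton] at hw
        rcases hw with rfl | rfl | rfl | rfl
        · exact Finset.mem_erase.2 ⟨hbz, hb2⟩
        · exact Finset.mem_erase.2 ⟨hcz, hc2⟩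
        · exact Finset.mem_erase.2 ⟨hw3z, hw32⟩
        · exact Finset.mem_erase.2 ⟨hw'z, hw'2⟩
      have hcard4 : ({b, c0, w3, w'} : Finset ℕ).card = 4 := by
        rw [Finset.card_insert_of_notMem (by simp [hbc, hb_w3, hb_w']),
          Finset.card_insert_of_notMem (by simp [hc_w3, hc_w']),
          Finset.card_insert_of_notMem (by simp [hw3w']), Finset.card_singleton]
      have hle := Finset.card_le_card hsub4
      rw [hcard4, Finset.card_erase_of_mem h.hz, hK2.1] at hle
      omega
    by_cases hK1 : IsBidirComplete 4 D1
    · -- explicit emerald D1 minus x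
      refine Or.inr ⟨D1.verts.erase x, ?_,
        hdisj_of _ (Finset.notMem_erase _ _)
          (fun hm => h.not_mem_D1 hb2 (Finset.mem_of_mem_erase hm))
          (fun hm => h.not_mem_D1 hc2 (Finset.mem_of_mem_erase hm))⟩
      refine ⟨?_, fun v hv => h.D1_sub_D (Finset.mem_of_mem_erase hv), ?_, ?_⟩
      · rw [Finset.card_erase_of_mem h.hx, hK1.1]
      · intro a ha bb hbb hab
        have ha1 := Finset.mem_of_mem_erase ha
        have hb1 := Finset.mem_of_mem_erase hbb
        have hax : a ≠ x := (Finset.mem_erase.1 ha).1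
        have hbx : bb ≠ x := (Finset.mem_erase.1 hbb).1
        exact (h.adj_D1 ha1 hb1).2 ⟨hK1.2 a ha1 bb hb1 hab,
          fun e' => hax e'.1, fun e' => hbx e'.2⟩
      · intro v hv
        have hv1 := Finset.mem_of_mem_erase hv
        have hvx := (Finset.mem_erase.1 hv).1
        by_cases hvy : v = y
        · subst hvy
          rw [h.deg_y hZ2s]
          exact k4_deg hK1 hv1
        · rw [h.deg_D1 hv1 hvx hvy]
          exact k4_deg hK1 hv1
    · rcases lemA D1 h1 hK1 x h.hx with ⟨e, he, hxe⟩ | ⟨S, hS, hxS⟩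
      · exact Or.inr ⟨e, h.emerald_D1 he hxe (fun _ => h.deg_y hZ2s),
          hdisj_of e hxe (fun hm => h.not_mem_D1 hb2 (he.2.1 hm))
            (fun hm => h.not_mem_D1 hc2 (he.2.1 hm))⟩
      · exact Or.inl ⟨S, h.collapsible_D1 hS hxS,
          hdisj_of S hxS (fun hm => h.not_mem_D1 hb2 (hS.1 hm))
            (fun hm => h.not_mem_D1 hc2 (hS.1 hm))⟩
  · -- use the inductive hypothesis on D2 with the triangle {z, b, c0}
    have hzb : z ≠ b := fun e => hbz e.symm
    have hzc : z ≠ c0 := fun e => hcz e.symm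
    have ht2card : ({z, b, c0} : Finset ℕ).card = 3 := by
      rw [Finset.card_insert_of_notMem (by simp [hzb, hzc]),
        Finset.card_insert_of_notMem (by simp [hbc]), Finset.card_singleton]
    have ht2sub : ({z, b, c0} : Finset ℕ) ⊆ D2.verts := by
      intro a ha
      simp only [Finset.mem_insert, Finset.mem_singleton] at ha
      rcases ha with rfl | rfl | rfl
      · exact h.hz
      · exact hb2
      · exact hc2
    have ht2adj : ∀ u ∈ ({z, b, c0} : Finset ℕ), ∀ v ∈ ({z, b, c0} : Finset ℕ),
        u ≠ v → D2.Adj u v := by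
      intro u hu v hv huv
      simp only [Finset.mem_insert, Finset.mem_singleton] at hu hv
      rcases hu with rfl | rfl | rfl <;> rcases hv with rfl | rfl | rfl
      · exact absurd rfl huv
      · exact h.adj_z_of_Z1 hb
      · exact h.adj_z_of_Z1 hc0
      · exact h.bd2 (h.adj_z_of_Z1 hb)
      · exact absurd rfl huv
      · exact hadjbc
      · exact h.bd2 (h.adj_z_of_Z1 hc0)
      · exact hadjcb
      · exact absurd rfl huv
    have hmemz : z ∈ ({z, b, c0} : Finset ℕ) := Finset.mem_insert_self _ _
    have hmemb : b ∈ ({z, b, c0} : Finset ℕ) := by simp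
    have hmemc : c0 ∈ ({z, b, c0} : Finset ℕ) := by simp
    rcases IH2 hK2 _ ht2card ht2sub ht2adj with ⟨S, hS, hdS⟩ | ⟨e, he, hde⟩
    · refine Or.inl ⟨S, h.collapsible_D2 hS (fun hm => Finset.disjoint_left.1 hdS hm hmemz),
        hdisj_of S (fun hm => h.not_mem_D2 h.hx (hS.1 hm))
          (fun hm => Finset.disjoint_left.1 hdS hm hmemb)
          (fun hm => Finset.disjoint_left.1 hdS hm hmemc)⟩
    · refine Or.inr ⟨e, h.emerald_D2 he (fun hm => Finset.disjoint_left.1 hde hm hmemz),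
        hdisj_of e (fun hm => h.not_mem_D2 h.hx (he.2.1 hm))
          (fun hm => Finset.disjoint_left.1 hde hm hmemb)
          (fun hm => Finset.disjoint_left.1 hde hm hmemc)⟩

theorem main_aux : ∀ D : Dgr, IsOre4 D → ¬ Dgr.IsBidirComplete 4 D →
    ∀ t : Finset ℕ, t.card = 3 → t ⊆ D.verts →
    (∀ u ∈ t, ∀ v ∈ t, u ≠ v → D.Adj u v) →
    (∃ S : Finset ℕ, D.OreCollapsible S ∧ Disjoint S t) ∨
    (∃ s : Finset ℕ, D.IsEmerald s ∧ Disjoint s t) := by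
  intro D hD
  induction hD with
  | k4 E hK => exact fun hn => absurd hK hn
  | comp D1 D2 D h1 h2 hcomp IH1 IH2 =>
    intro _ t ht3 htv htadj
    obtain ⟨x, y, z, Z1, Z2, hc⟩ := oreComp_iff.1 hcomp
    by_cases hT1 : ∃ a ∈ t, a ∈ D1.verts
    · obtain ⟨a, hat, haD1⟩ := hT1
      by_cases hT2 : ∃ b ∈ t, b ∉ D1.verts
      · obtain ⟨b, hbt, hbn⟩ := hT2
        have hbe : b ∈ D2.verts.erase z := by
          have hbv := htv hbt
          rw [hc.hverts] at hbv
          rcases Finset.mem_union.1 hbv with hh | hh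
          · exact absurd hh hbn
          · exact hh
        obtain ⟨hbz, hb2⟩ := Finset.mem_erase.1 hbe
        have hab : a ≠ b := fun e => hbn (e ▸ haD1)
        have hcross := (hc.adj_cross haD1 hb2 hbz).1 (htadj a hat b hbt hab)
        have hc0ex : ∃ c0 ∈ t, c0 ≠ a ∧ c0 ≠ b := by
          by_contra hcon
          push_neg at hcon
          have hsub : t ⊆ {a, b} := by
            intro w hw
            rcases eq_or_ne w a with rfl | hwa
            · exact Finset.mem_insert_self _ _
            · rw [hcon w hw hwa]
              exact Finset.mem_insert_of_mem (Finset.mem_singleton_self _)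
          have hle := Finset.card_le_card hsub
          have : ({a, b} : Finset ℕ).card ≤ 2 := Finset.card_insert_le _ _ |>.trans (by simp)
          omega
        obtain ⟨c0, hc0t, hca, hcb⟩ := hc0ex
        have hc0n : c0 ∉ D1.verts := by
          intro hc0D1
          have hcross2 := (hc.adj_cross hc0D1 hb2 hbz).1 (htadj c0 hc0t b hbt hcb)
          have hDac : D.Adj a c0 := htadj a hat c0 hc0t (fun e => hca e.symm)
          rcases hcross with ⟨hax, -⟩ | ⟨hay, -⟩ <;> rcases hcross2 with ⟨hcx, -⟩ | ⟨hcy, -⟩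
          · exact hca (hcx.trans hax.symm)
          · exact hc.not_adj_xy (by rw [← hax, ← hcy]; exact hDac)
          · exact hc.swap.not_adj_xy (by rw [← hay, ← hcx]; exact hDac)
          · exact hca (hcy.trans hay.symm)
        have hc0e : c0 ∈ D2.verts.erase z := by
          have hcv := htv hc0t
          rw [hc.hverts] at hcv
          rcases Finset.mem_union.1 hcv with hh | hh
          · exact absurd hh hc0n
          · exact hh
        obtain ⟨hc0z, hc02⟩ := Finset.mem_erase.1 hc0e
        have hcross2 := (hc.adj_cross haD1 hc02 hc0z).1 (htadj a hat c0 hc0t (fun e => hca e.symm))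
        have hbc : b ≠ c0 := fun e => hcb e.symm
        have hadjbc : D2.Adj b c0 := (hc.adj_D2 hb2 hc02 hbz hc0z).1 (htadj b hbt c0 hc0t hbc)
        have hadjcb : D2.Adj c0 b := (hc.adj_D2 hc02 hb2 hc0z hbz).1 (htadj c0 hc0t b hbt hcb)
        have hac : a ≠ c0 := fun e => hca e.symm
        have hteq : t = {a, b, c0} := by
          have hsub : ({a, b, c0} : Finset ℕ) ⊆ t := by
            intro w hw
            simp only [Finset.mem_insert, Finset.mem_singleton] at hw
            rcases hw with rfl | rfl | rfl <;> assumption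
          have hcard3 : ({a, b, c0} : Finset ℕ).card = 3 := by
            rw [Finset.card_insert_of_notMem (by simp [hab, hac]),
              Finset.card_insert_of_notMem (by simp [hbc]), Finset.card_singleton]
          exact (Finset.eq_of_subset_of_card_le hsub (by omega)).symm
        rcases hcross with ⟨rfl, hbZ1⟩ | ⟨rfl, hbZ2⟩
        · rcases hcross2 with ⟨-, hcZ1⟩ | ⟨e', -⟩
          · exact hc.step h1 IH2 hbZ1 hcZ1 hbc hadjbc hadjcb hteq
          · exact absurd e' hc.hxy
        · rcases hcross2 with ⟨e', -⟩ | ⟨-, hcZ2⟩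
          · exact absurd e'.symm hc.hxy
          · exact hc.swap.step h1 IH2 hbZ2 hcZ2 hbc hadjbc hadjcb hteq
      · push_neg at hT2
        by_cases hK2 : IsBidirComplete 4 D2
        · refine Or.inr ⟨D2.verts.erase z,
            hc.emerald_D2 (k4_emerald hK2 hc.hz) (Finset.notMem_erase _ _), ?_⟩
          exact Finset.disjoint_left.2
            (fun w hw hwt => hc.not_mem_D1 (Finset.mem_of_mem_erase hw) (hT2 _ hwt))
        · rcases lemA D2 h2 hK2 z hc.hz with ⟨e, he, hze⟩ | ⟨S, hS, hzS⟩
          · exact Or.inr ⟨e, hc.emerald_D2 he hze,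
              Finset.disjoint_left.2 (fun w hw hwt => hc.not_mem_D1 (he.2.1 hw) (hT2 _ hwt))⟩
          · exact Or.inl ⟨S, hc.collapsible_D2 hS hzS,
              Finset.disjoint_left.2 (fun w hw hwt => hc.not_mem_D1 (hS.1 hw) (hT2 _ hwt))⟩
    · push_neg at hT1
      exact Or.inl ⟨D1.verts, hc.collapsible_D1_verts h1,
        Finset.disjoint_left.2 (fun w hw hwt => hT1 _ hwt hw)⟩


end OreAux
/-- a 4-Ore digraph other than the bidirected `K4` contains, for
every bidirected triangle `t`, an Ore-collapsible subdigraph or an emerald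
disjoint from `t`. -/
theorem stmt_7 (D : Dgr) (h : IsOre4 D) (hnotK4 : ¬ Dgr.IsBidirComplete 4 D)
    (t : Finset ℕ) (ht3 : t.card = 3) (htv : t ⊆ D.verts)
    (htadj : ∀ u ∈ t, ∀ v ∈ t, u ≠ v → D.Adj u v) :
    (∃ S : Finset ℕ, D.OreCollapsible S ∧ Disjoint S t) ∨
    (∃ s : Finset ℕ, D.IsEmerald s ∧ Disjoint s t) :=
  OreAux.main_aux D h hnotK4 t ht3 htv htadj
end

section
/- If R is an Ore-collapsible induced subdigraph of a 4-Ore digraph D, then there exists a diamond or an emerald of D all of whose vertices lie in V(R). -/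
open Dgr

namespace Dgr

/-- a diamond together with its designated (possibly missing) digon pair -/
def DiamondPair (T : Dgr) (s : Finset ℕ) (p q : ℕ) : Prop :=
  s.card = 4 ∧ s ⊆ T.verts ∧ p ∈ s ∧ q ∈ s ∧ p ≠ q ∧
  (∀ u ∈ s, ∀ v ∈ s, u ≠ v → ¬(u = p ∧ v = q) → ¬(u = q ∧ v = p) → T.Adj u v) ∧
  (∀ v ∈ s, v ≠ p → v ≠ q → T.deg v = 6)

lemma DiamondPair.isDiamond {T : Dgr} {s : Finset ℕ} {p q : ℕ}
    (h : T.DiamondPair s p q) : T.IsDiamond s :=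
  ⟨h.1, h.2.1, p, h.2.2.1, q, h.2.2.2.1, h.2.2.2.2.1, h.2.2.2.2.2.1, h.2.2.2.2.2.2⟩

/-- diamond or emerald -/
def TObj (T : Dgr) (s : Finset ℕ) : Prop :=
  T.IsEmerald s ∨ ∃ p q, T.DiamondPair s p q

lemma TObj.subset {T : Dgr} {s : Finset ℕ} (h : T.TObj s) : s ⊆ T.verts := by
  rcases h with h | ⟨p, q, h⟩
  · exact h.2.1
  · exact h.2.1

/-- the refined conclusion with respect to an arc `(a,b)` -/
def Good (T : Dgr) (a b : ℕ) : Prop :=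
  ∃ s : Finset ℕ,
    (T.IsEmerald s ∧ a ∉ s ∧ b ∉ s) ∨
    ∃ p q, T.DiamondPair s p q ∧ (a ∈ s → a = p ∨ a = q) ∧ (b ∈ s → b = p ∨ b = q)

/-- the statement proved by induction on the 4-Ore structure -/
def CAND (T : Dgr) : Prop :=
  (∀ w, ∃ s, T.TObj s ∧ w ∉ s) ∧ ∀ a b, T.Adj a b → T.Good a b

lemma bidirComplete_deg {T : Dgr} (hK : IsBidirComplete 4 T) {v : ℕ}
    (hv : v ∈ T.verts) : T.deg v = 6 := by
  have hout : {u | T.Adj v u} = ↑(T.verts.erase v) := by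
    ext u
    simp only [Set.mem_setOf_eq, Finset.coe_erase, Set.mem_diff, Finset.mem_coe,
      Set.mem_singleton_iff]
    constructor
    · intro h
      refine ⟨(T.adj_mem h).2, ?_⟩
      rintro rfl; exact T.adj_irrefl _ h
    · rintro ⟨hu, hne⟩
      exact hK.2 v hv u hu (Ne.symm hne)
  have hin : {u | T.Adj u v} = ↑(T.verts.erase v) := by
    ext u
    simp only [Set.mem_setOf_eq, Finset.coe_erase, Set.mem_diff, Finset.mem_coe,
      Set.mem_singleton_iff]
    constructor
    · intro h
      refine ⟨(T.adj_mem h).1, ?_⟩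
      rintro rfl; exact T.adj_irrefl _ h
    · rintro ⟨hu, hne⟩
      exact hK.2 u hu v hv hne
  have hc : (T.verts.erase v).card = 3 := by
    rw [Finset.card_erase_of_mem hv, hK.1]
  unfold deg
  rw [hout, hin, Set.ncard_coe_finset, hc]

lemma k4_CAND {T : Dgr} (hK : IsBidirComplete 4 T) : CAND T := by
  constructor
  · intro w
    have hle : 3 ≤ (T.verts.erase w).card := by
      rcases Finset.decidableMem w T.verts with h | h
      · -- w ∉ verts  (decidable: isFalse h)
        have : (T.verts.erase w) = T.verts := Finset.erase_eq_of_notMem h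
        rw [this, hK.1]; omega
      · rw [Finset.card_erase_of_mem h, hK.1]
    obtain ⟨s, hs, hcard⟩ := Finset.exists_subset_card_eq (s := T.verts.erase w) (n := 3) hle
    have hsub : s ⊆ T.verts := hs.trans (Finset.erase_subset w T.verts)
    refine ⟨s, Or.inl ⟨hcard, hsub, ?_, ?_⟩, ?_⟩
    · intro u hu v hv huv
      exact hK.2 u (hsub hu) v (hsub hv) huv
    · intro v hv
      exact bidirComplete_deg hK (hsub hv)
    · intro hw
      exact (Finset.mem_erase.1 (hs hw)).1 rfl
  · intro a b hab
    have ha : a ∈ T.verts := (T.adj_mem hab).1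
    have hb : b ∈ T.verts := (T.adj_mem hab).2
    have hne : a ≠ b := by rintro rfl; exact T.adj_irrefl a hab
    refine ⟨T.verts, Or.inr ⟨a, b, ⟨hK.1, le_refl _, ha, hb, hne, ?_, ?_⟩,
      fun _ => Or.inl rfl, fun _ => Or.inr rfl⟩⟩
    · intro u hu v hv huv _ _
      exact hK.2 u hu v hv huv
    · intro v hv _ _
      exact bidirComplete_deg hK hv

lemma comp_CAND {D1 D2 D : Dgr} (hco : IsOreComp D1 D2 D)
    (ih1 : CAND D1) (ih2 : CAND D2) : CAND D := by
  obtain ⟨hb1, hb2, hdisj, x, y, z, Z1, Z2, hx1, hy1, hxy, haxy, hz2, hZ, hZd,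
    hZ1ne, hZ2ne, hV, hA⟩ := hco
  -- basic membership facts
  have hn12 : ∀ {w : ℕ}, w ∈ D1.verts → w ∉ D2.verts := fun hw =>
    Finset.disjoint_left.mp hdisj hw
  have hn21 : ∀ {w : ℕ}, w ∈ D2.verts → w ∉ D1.verts := fun hw =>
    Finset.disjoint_right.mp hdisj hw
  have hZ1mem : ∀ {w : ℕ}, w ∈ Z1 → D2.Adj z w := by
    intro w hw
    have hmem : w ∈ Z1 ∪ Z2 := Or.inl hw
    rw [hZ] at hmem; exact hmem
  have hZ2mem : ∀ {w : ℕ}, w ∈ Z2 → D2.Adj z w := by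
    intro w hw
    have hmem : w ∈ Z1 ∪ Z2 := Or.inr hw
    rw [hZ] at hmem; exact hmem
  have hZ12 : ∀ {w : ℕ}, D2.Adj z w → w ∈ Z1 ∨ w ∈ Z2 := by
    intro w hw
    have hmem : w ∈ Z1 ∪ Z2 := by rw [hZ]; exact hw
    exact hmem
  have hZ1v : ∀ {w : ℕ}, w ∈ Z1 → w ∈ D2.verts ∧ w ≠ z := by
    intro w hw
    have h := hZ1mem hw
    exact ⟨(D2.adj_mem h).2, by rintro rfl; exact D2.adj_irrefl _ h⟩
  have hZ2v : ∀ {w : ℕ}, w ∈ Z2 → w ∈ D2.verts ∧ w ≠ z := by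
    intro w hw
    have h := hZ2mem hw
    exact ⟨(D2.adj_mem h).2, by rintro rfl; exact D2.adj_irrefl _ h⟩
  have hxy2 : x ∉ D2.verts := hn12 hx1
  have hyy2 : y ∉ D2.verts := hn12 hy1
  -- adjacency characterizations
  have hA2 : ∀ w u : ℕ, w ∈ D2.verts → w ≠ z →
      (D.Adj w u ↔ (D2.Adj w u ∧ u ≠ z) ∨ (u = x ∧ w ∈ Z1 ∧ D2.Adj w z) ∨
        (u = y ∧ w ∈ Z2 ∧ D2.Adj w z)) := by
    intro w u hw hwz
    rw [hA w u]
    constructor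
    · rintro (⟨h, -, -⟩ | ⟨h, -, huz⟩ | ⟨rfl, -, -⟩ | ⟨rfl, hwZ, hadj⟩ |
        ⟨rfl, -, -⟩ | ⟨rfl, hwZ, hadj⟩)
      · exact absurd (D1.adj_mem h).1 (hn21 hw)
      · exact Or.inl ⟨h, huz⟩
      · exact absurd hw hxy2
      · exact Or.inr (Or.inl ⟨rfl, hwZ, hadj⟩)
      · exact absurd hw hyy2
      · exact Or.inr (Or.inr ⟨rfl, hwZ, hadj⟩)
    · rintro (⟨h, huz⟩ | ⟨rfl, hwZ, hadj⟩ | ⟨rfl, hwZ, hadj⟩)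
      · exact Or.inr (Or.inl ⟨h, hwz, huz⟩)
      · exact Or.inr (Or.inr (Or.inr (Or.inl ⟨rfl, hwZ, hadj⟩)))
      · exact Or.inr (Or.inr (Or.inr (Or.inr (Or.inr ⟨rfl, hwZ, hadj⟩))))
  have hA2' : ∀ w u : ℕ, w ∈ D2.verts → w ≠ z →
      (D.Adj u w ↔ (D2.Adj u w ∧ u ≠ z) ∨ (u = x ∧ w ∈ Z1 ∧ D2.Adj z w) ∨
        (u = y ∧ w ∈ Z2 ∧ D2.Adj z w)) := by
    intro w u hw hwz
    rw [hA u w]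
    constructor
    · rintro (⟨h, -, -⟩ | ⟨h, huz, -⟩ | ⟨rfl, hwZ, hadj⟩ | ⟨rfl, -, -⟩ |
        ⟨rfl, hwZ, hadj⟩ | ⟨rfl, -, -⟩)
      · exact absurd (D1.adj_mem h).2 (hn21 hw)
      · exact Or.inl ⟨h, huz⟩
      · exact Or.inr (Or.inl ⟨rfl, hwZ, hadj⟩)
      · exact absurd hw hxy2
      · exact Or.inr (Or.inr ⟨rfl, hwZ, hadj⟩)
      · exact absurd hw hyy2
    · rintro (⟨h, huz⟩ | ⟨rfl, hwZ, hadj⟩ | ⟨rfl, hwZ, hadj⟩)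
      · exact Or.inr (Or.inl ⟨h, huz, hwz⟩)
      · exact Or.inr (Or.inr (Or.inl ⟨rfl, hwZ, hadj⟩))
      · exact Or.inr (Or.inr (Or.inr (Or.inr (Or.inl ⟨rfl, hwZ, hadj⟩))))
  have hA1 : ∀ w u : ℕ, w ∈ D1.verts → w ≠ x → w ≠ y → (D.Adj w u ↔ D1.Adj w u) := by
    intro w u hw hwx hwy
    rw [hA w u]
    constructor
    · rintro (⟨h, -, -⟩ | ⟨h, -, -⟩ | ⟨rfl, -, -⟩ | ⟨rfl, hwZ, -⟩ |
        ⟨rfl, -, -⟩ | ⟨rfl, hwZ, -⟩)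
      · exact h
      · exact absurd (D2.adj_mem h).1 (hn12 hw)
      · exact absurd rfl hwx
      · exact absurd hw (hn21 (hZ1v hwZ).1)
      · exact absurd rfl hwy
      · exact absurd hw (hn21 (hZ2v hwZ).1)
    · intro h
      exact Or.inl ⟨h, fun hc => hwx hc.1, fun hc => hwy hc.1⟩
  have hA1' : ∀ w u : ℕ, w ∈ D1.verts → w ≠ x → w ≠ y → (D.Adj u w ↔ D1.Adj u w) := by
    intro w u hw hwx hwy
    rw [hA u w]
    constructor
    · rintro (⟨h, -, -⟩ | ⟨h, -, -⟩ | ⟨rfl, hwZ, -⟩ | ⟨rfl, -, -⟩ |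
        ⟨rfl, hwZ, -⟩ | ⟨rfl, -, -⟩)
      · exact h
      · exact absurd (D2.adj_mem h).2 (hn12 hw)
      · exact absurd hw (hn21 (hZ1v hwZ).1)
      · exact absurd rfl hwx
      · exact absurd hw (hn21 (hZ2v hwZ).1)
      · exact absurd rfl hwy
    · intro h
      exact Or.inl ⟨h, fun hc => hwy hc.2, fun hc => hwx hc.2⟩
  -- counting helper
  have hcount : ∀ (A B : Set ℕ) (c : ℕ), A ⊆ ↑D2.verts → z ∈ A → c ∉ D2.verts →
      B = insert c (A \ {z}) → B.ncard = A.ncard := by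
    intro A B c hAsub hzA hc hB
    have hfA : A.Finite := (D2.verts.finite_toSet).subset hAsub
    rw [hB, Set.ncard_insert_of_notMem (fun hcm => hc (hAsub hcm.1)) (hfA.diff (t := {z}))]
    exact Set.ncard_diff_singleton_add_one hzA hfA
  -- degree preservation, split side
  have hdeg2 : ∀ w : ℕ, w ∈ D2.verts → w ≠ z → D.deg w = D2.deg w := by
    intro w hw hwz
    have hOsub : {u | D2.Adj w u} ⊆ ↑D2.verts := fun u hu => (D2.adj_mem hu).2
    have hIsub : {u | D2.Adj u w} ⊆ ↑D2.verts := fun u hu => (D2.adj_mem hu).1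
    have hZ1notZ2 : ∀ {c : ℕ}, c ∈ Z1 → c ∉ Z2 := fun hc =>
      Set.disjoint_left.mp hZd hc
    have hout : {u | D.Adj w u}.ncard = {u | D2.Adj w u}.ncard := by
      by_cases hwzadj : D2.Adj w z
      · rcases hZ12 (hb2 hwzadj) with hw1 | hw2
        · apply hcount _ _ x hOsub hwzadj hxy2
          ext u
          simp only [Set.mem_setOf_eq, Set.mem_insert_iff, Set.mem_diff,
            Set.mem_singleton_iff]
          rw [hA2 w u hw hwz]
          constructor
          · rintro (⟨h, hz⟩ | ⟨rfl, -, -⟩ | ⟨rfl, hwZ2, -⟩)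
            · exact Or.inr ⟨h, hz⟩
            · exact Or.inl rfl
            · exact absurd hwZ2 (hZ1notZ2 hw1)
          · rintro (rfl | ⟨h, hz⟩)
            · exact Or.inr (Or.inl ⟨rfl, hw1, hwzadj⟩)
            · exact Or.inl ⟨h, hz⟩
        · apply hcount _ _ y hOsub hwzadj hyy2
          ext u
          simp only [Set.mem_setOf_eq, Set.mem_insert_iff, Set.mem_diff,
            Set.mem_singleton_iff]
          rw [hA2 w u hw hwz]
          constructor
          · rintro (⟨h, hz⟩ | ⟨rfl, hwZ1, -⟩ | ⟨rfl, -, -⟩)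
            · exact Or.inr ⟨h, hz⟩
            · exact absurd hw2 (hZ1notZ2 hwZ1)
            · exact Or.inl rfl
          · rintro (rfl | ⟨h, hz⟩)
            · exact Or.inr (Or.inr ⟨rfl, hw2, hwzadj⟩)
            · exact Or.inl ⟨h, hz⟩
      · have hEq : {u | D.Adj w u} = {u | D2.Adj w u} := by
          ext u
          simp only [Set.mem_setOf_eq]
          rw [hA2 w u hw hwz]
          constructor
          · rintro (⟨h, -⟩ | ⟨-, -, h⟩ | ⟨-, -, h⟩)
            · exact h
            · exact absurd h hwzadj
            · exact absurd h hwzadj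
          · intro h
            exact Or.inl ⟨h, by rintro rfl; exact hwzadj h⟩
        rw [hEq]
    have hin : {u | D.Adj u w}.ncard = {u | D2.Adj u w}.ncard := by
      by_cases hzwadj : D2.Adj z w
      · rcases hZ12 hzwadj with hw1 | hw2
        · apply hcount _ _ x hIsub hzwadj hxy2
          ext u
          simp only [Set.mem_setOf_eq, Set.mem_insert_iff, Set.mem_diff,
            Set.mem_singleton_iff]
          rw [hA2' w u hw hwz]
          constructor
          · rintro (⟨h, hz⟩ | ⟨rfl, -, -⟩ | ⟨rfl, hwZ2, -⟩)
            · exact Or.inr ⟨h, hz⟩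
            · exact Or.inl rfl
            · exact absurd hwZ2 (hZ1notZ2 hw1)
          · rintro (rfl | ⟨h, hz⟩)
            · exact Or.inr (Or.inl ⟨rfl, hw1, hzwadj⟩)
            · exact Or.inl ⟨h, hz⟩
        · apply hcount _ _ y hIsub hzwadj hyy2
          ext u
          simp only [Set.mem_setOf_eq, Set.mem_insert_iff, Set.mem_diff,
            Set.mem_singleton_iff]
          rw [hA2' w u hw hwz]
          constructor
          · rintro (⟨h, hz⟩ | ⟨rfl, hwZ1, -⟩ | ⟨rfl, -, -⟩)
            · exact Or.inr ⟨h, hz⟩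
            · exact absurd hw2 (hZ1notZ2 hwZ1)
            · exact Or.inl rfl
          · rintro (rfl | ⟨h, hz⟩)
            · exact Or.inr (Or.inr ⟨rfl, hw2, hzwadj⟩)
            · exact Or.inl ⟨h, hz⟩
      · have hEq : {u | D.Adj u w} = {u | D2.Adj u w} := by
          ext u
          simp only [Set.mem_setOf_eq]
          rw [hA2' w u hw hwz]
          constructor
          · rintro (⟨h, -⟩ | ⟨-, -, h⟩ | ⟨-, -, h⟩)
            · exact h
            · exact absurd h hzwadj
            · exact absurd h hzwadj
          · intro h
            refine Or.inl ⟨h, ?_⟩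
            rintro rfl; exact hzwadj h
        rw [hEq]
    unfold deg
    rw [hout, hin]
  -- degree preservation, digon side
  have hdeg1 : ∀ w : ℕ, w ∈ D1.verts → w ≠ x → w ≠ y → D.deg w = D1.deg w := by
    intro w hw hwx hwy
    have h1 : {u | D.Adj w u} = {u | D1.Adj w u} :=
      Set.ext fun u => hA1 w u hw hwx hwy
    have h2 : {u | D.Adj u w} = {u | D1.Adj u w} :=
      Set.ext fun u => hA1' w u hw hwx hwy
    unfold deg
    rw [h1, h2]
  -- arc/vertex lifts
  have hlift2adj : ∀ {c d : ℕ}, c ≠ z → d ≠ z → D2.Adj c d → D.Adj c d := by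
    intro c d hc hd h
    rw [hA]; exact Or.inr (Or.inl ⟨h, hc, hd⟩)
  have hlift1adj : ∀ {c d : ℕ}, ¬(c = x ∧ d = y) → ¬(c = y ∧ d = x) →
      D1.Adj c d → D.Adj c d := by
    intro c d h1 h2 h
    rw [hA]; exact Or.inl ⟨h, h1, h2⟩
  have hliftD2verts : ∀ {c : ℕ}, c ∈ D2.verts → c ≠ z → c ∈ D.verts := by
    intro c hc hcz
    rw [hV]; exact Finset.mem_union_right _ (Finset.mem_erase.2 ⟨hcz, hc⟩)
  have hliftD1verts : ∀ {c : ℕ}, c ∈ D1.verts → c ∈ D.verts := by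
    intro c hc
    rw [hV]; exact Finset.mem_union_left _ hc
  -- lifting an object from the split side
  have liftA : ∀ s : Finset ℕ, D2.TObj s → z ∉ s → D.TObj s := by
    intro s hobj hzs
    have hmem : ∀ {c : ℕ}, c ∈ s → c ≠ z := fun hc h => hzs (h ▸ hc)
    rcases hobj with ⟨hc3, hsub, hadj, hdeg⟩ | ⟨p, q, hc4, hsub, hp, hq, hpq, hadj, hdeg⟩
    · refine Or.inl ⟨hc3, fun c hc => hliftD2verts (hsub hc) (hmem hc), ?_, ?_⟩
      · intro u hu v hv huv
        exact hlift2adj (hmem hu) (hmem hv) (hadj u hu v hv huv)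
      · intro v hv
        rw [hdeg2 v (hsub hv) (hmem hv)]
        exact hdeg v hv
    · refine Or.inr ⟨p, q, hc4, fun c hc => hliftD2verts (hsub hc) (hmem hc),
        hp, hq, hpq, ?_, ?_⟩
      · intro u hu v hv huv h1 h2
        exact hlift2adj (hmem hu) (hmem hv) (hadj u hu v hv huv h1 h2)
      · intro v hv hvp hvq
        rw [hdeg2 v (hsub hv) (hmem hv)]
        exact hdeg v hv hvp hvq
  -- lifting the good object of `D1` w.r.t. the digon `[x,y]`
  have liftB : ∃ s : Finset ℕ, s ⊆ D1.verts ∧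
      ((D.IsEmerald s ∧ x ∉ s ∧ y ∉ s) ∨
       ∃ p q, D.DiamondPair s p q ∧ (x ∈ s → x = p ∨ x = q) ∧
         (y ∈ s → y = p ∨ y = q)) := by
    obtain ⟨s, hcase⟩ := ih1.2 x y haxy
    rcases hcase with ⟨⟨hc3, hsub, hadj, hdeg⟩, hxs, hys⟩ |
      ⟨p, q, ⟨hc4, hsub, hp, hq, hpq, hadj, hdeg⟩, hxc, hyc⟩
    · refine ⟨s, hsub, Or.inl ⟨⟨hc3, fun c hc => hliftD1verts (hsub hc), ?_, ?_⟩,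
        hxs, hys⟩⟩
      · intro u hu v hv huv
        refine hlift1adj ?_ ?_ (hadj u hu v hv huv)
        · rintro ⟨rfl, -⟩; exact hxs hu
        · rintro ⟨rfl, -⟩; exact hys hu
      · intro v hv
        rw [hdeg1 v (hsub hv) (fun h => hxs (h ▸ hv)) (fun h => hys (h ▸ hv))]
        exact hdeg v hv
    · refine ⟨s, hsub, Or.inr ⟨p, q, ⟨hc4, fun c hc => hliftD1verts (hsub hc),
        hp, hq, hpq, ?_, ?_⟩, hxc, hyc⟩⟩
      · intro u hu v hv huv hupq huqp
        refine hlift1adj ?_ ?_ (hadj u hu v hv huv hupq huqp)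
        · rintro ⟨rfl, rfl⟩
          rcases hxc hu with rfl | rfl <;> rcases hyc hv with rfl | rfl
          · exact hxy rfl
          · exact hupq ⟨rfl, rfl⟩
          · exact huqp ⟨rfl, rfl⟩
          · exact hxy rfl
        · rintro ⟨rfl, rfl⟩
          rcases hxc hv with rfl | rfl <;> rcases hyc hu with rfl | rfl
          · exact hxy rfl
          · exact huqp ⟨rfl, rfl⟩
          · exact hupq ⟨rfl, rfl⟩
          · exact hxy rfl
      · intro v hv hvp hvq
        have hvx : v ≠ x := by
          rintro rfl
          rcases hxc hv with rfl | rfl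
          · exact hvp rfl
          · exact hvq rfl
        have hvy : v ≠ y := by
          rintro rfl
          rcases hyc hv with rfl | rfl
          · exact hvp rfl
          · exact hvq rfl
        rw [hdeg1 v (hsub hv) hvx hvy]
        exact hdeg v hv hvp hvq
  -- the two canonical objects
  obtain ⟨t0, hobj0, hz0⟩ := ih2.1 z
  have ht0sub : t0 ⊆ D2.verts := hobj0.subset
  have hobjD : D.TObj t0 := liftA t0 hobj0 hz0
  have ht0D1 : ∀ {c : ℕ}, c ∈ D1.verts → c ∉ t0 := fun hc h => (hn12 hc) (ht0sub h)
  obtain ⟨t1, ht1sub, ht1case⟩ := liftB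
  have good1 : ∀ a b : ℕ, (a ∉ D1.verts ∨ a = x ∨ a = y) →
      (b ∉ D1.verts ∨ b = x ∨ b = y) → D.Good a b := by
    intro a b ha hb
    rcases ht1case with ⟨hem, hxs, hys⟩ | ⟨p, q, hpr, hxc, hyc⟩
    · refine ⟨t1, Or.inl ⟨hem, ?_, ?_⟩⟩
      · intro has
        rcases ha with h | rfl | rfl
        · exact h (ht1sub has)
        · exact hxs has
        · exact hys has
      · intro hbs
        rcases hb with h | rfl | rfl
        · exact h (ht1sub hbs)
        · exact hxs hbs
        · exact hys hbs
    · refine ⟨t1, Or.inr ⟨p, q, hpr, ?_, ?_⟩⟩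
      · intro has
        rcases ha with h | rfl | rfl
        · exact absurd (ht1sub has) h
        · exact hxc has
        · exact hyc has
      · intro hbs
        rcases hb with h | rfl | rfl
        · exact absurd (ht1sub hbs) h
        · exact hxc hbs
        · exact hyc hbs
  constructor
  · -- part 1: avoiding any given vertex
    intro w
    by_cases hw : w ∈ D2.verts ∧ w ≠ z
    · refine ⟨t1, ?_, fun hws => (hn21 hw.1) (ht1sub hws)⟩
      rcases ht1case with ⟨hem, -, -⟩ | ⟨p, q, hpr, -, -⟩
      · exact Or.inl hem
      · exact Or.inr ⟨p, q, hpr⟩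
    · refine ⟨t0, hobjD, ?_⟩
      intro hws
      exact hw ⟨ht0sub hws, fun h => hz0 (h ▸ hws)⟩
  · -- part 2: good for every arc
    intro a b hab
    rcases (hA a b).mp hab with ⟨h1, -, -⟩ | ⟨h2, -, -⟩ | ⟨hax, hbZ, -⟩ |
      ⟨hbx, haZ, -⟩ | ⟨hay, hbZ, -⟩ | ⟨hby, haZ, -⟩
    · -- both ends on the digon side: use the split-side object
      have haD1 : a ∈ D1.verts := (D1.adj_mem h1).1
      have hbD1 : b ∈ D1.verts := (D1.adj_mem h1).2
      rcases hobjD with hem | ⟨p, q, hpr⟩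
      · exact ⟨t0, Or.inl ⟨hem, ht0D1 haD1, ht0D1 hbD1⟩⟩
      · exact ⟨t0, Or.inr ⟨p, q, hpr, fun h => absurd h (ht0D1 haD1),
          fun h => absurd h (ht0D1 hbD1)⟩⟩
    · exact good1 a b (Or.inl (hn21 (D2.adj_mem h2).1))
        (Or.inl (hn21 (D2.adj_mem h2).2))
    · exact good1 a b (Or.inr (Or.inl hax)) (Or.inl (hn21 (hZ1v hbZ).1))
    · exact good1 a b (Or.inl (hn21 (hZ1v haZ).1)) (Or.inr (Or.inl hbx))
    · exact good1 a b (Or.inr (Or.inr hay)) (Or.inl (hn21 (hZ2v hbZ).1))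
    · exact good1 a b (Or.inl (hn21 (hZ2v haZ).1)) (Or.inr (Or.inr hby))

lemma key_CAND {T : Dgr} (h : IsOre4 T) : CAND T := by
  induction h with
  | k4 T hK => exact k4_CAND hK
  | comp D1 D2 D h1 h2 hco ih1 ih2 => exact comp_CAND hco ih1 ih2

end Dgr

/-- every Ore-collapsible induced subdigraph of a 4-Ore digraph
contains all the vertices of some diamond or emerald of `D`. -/
theorem stmt_8 (D : Dgr) (h : IsOre4 D) (S : Finset ℕ) (hS : D.OreCollapsible S) :
    ∃ s : Finset ℕ, (D.IsDiamond s ∨ D.IsEmerald s) ∧ s ⊆ S := by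
  obtain ⟨hSsub, hcard, u, v, huv, hbdry, hOre⟩ := hS
  have huB : u ∈ D.bdry S := by rw [hbdry]; exact Set.mem_insert _ _
  have hvB : v ∈ D.bdry S := by rw [hbdry]; exact Set.mem_insert_of_mem _ rfl
  have hu : u ∈ S := huB.1
  have hv : v ∈ S := hvB.1
  have huR : u ∈ (D.induce S).verts := Finset.mem_inter.2 ⟨hSsub hu, hu⟩
  have hvR : v ∈ (D.induce S).verts := Finset.mem_inter.2 ⟨hSsub hv, hv⟩
  have hadjuv : ((D.induce S).addDigon u v).Adj u v :=
    Or.inr ⟨huv, huR, hvR, Or.inl ⟨rfl, rfl⟩⟩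
  obtain ⟨s, hcase⟩ := (key_CAND hOre).2 u v hadjuv
  -- interior vertices have all their neighbours in `S`
  have hint : ∀ c d : ℕ, c ∈ S → c ≠ u → c ≠ v → (D.Adj d c ∨ D.Adj c d) →
      d ∈ S := by
    intro c d hc hcu hcv hadj
    by_contra hdS
    have hdD : d ∈ D.verts := by
      rcases hadj with h | h
      · exact (D.adj_mem h).1
      · exact (D.adj_mem h).2
    have hcb : c ∈ D.bdry S := ⟨hc, d, hdD, hdS, hadj⟩
    rw [hbdry] at hcb
    rcases hcb with h | h
    · exact hcu h
    · exact hcv h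
  -- interior vertices keep their degree
  have hdegi : ∀ c : ℕ, c ∈ S → c ≠ u → c ≠ v →
      ((D.induce S).addDigon u v).deg c = D.deg c := by
    intro c hc hcu hcv
    have h1 : {d | ((D.induce S).addDigon u v).Adj c d} = {d | D.Adj c d} := by
      ext d
      simp only [Set.mem_setOf_eq]
      constructor
      · rintro (⟨h, -, -⟩ | ⟨-, -, -, ⟨hc1, -⟩ | ⟨hc1, -⟩⟩)
        · exact h
        · exact absurd hc1 hcu
        · exact absurd hc1 hcv
      · intro h
        exact Or.inl ⟨h, hc, hint c d hc hcu hcv (Or.inr h)⟩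
    have h2 : {d | ((D.induce S).addDigon u v).Adj d c} = {d | D.Adj d c} := by
      ext d
      simp only [Set.mem_setOf_eq]
      constructor
      · rintro (⟨h, -, -⟩ | ⟨-, -, -, ⟨-, hc1⟩ | ⟨-, hc1⟩⟩)
        · exact h
        · exact absurd hc1 hcv
        · exact absurd hc1 hcu
      · intro h
        exact Or.inl ⟨h, hint c d hc hcu hcv (Or.inl h), hc⟩
    unfold Dgr.deg
    rw [h1, h2]
  -- adjacency transfer off the added digon
  have hadjt : ∀ c d : ℕ, ((D.induce S).addDigon u v).Adj c d →
      ¬(c = u ∧ d = v) → ¬(c = v ∧ d = u) → D.Adj c d := by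
    intro c d h h1 h2
    rcases h with ⟨h, -, -⟩ | ⟨-, -, -, hcd | hcd⟩
    · exact h
    · exact absurd hcd h1
    · exact absurd hcd h2
  rcases hcase with ⟨⟨hc3, hsub, hadj, hdeg⟩, hus, hvs⟩ |
    ⟨p, q, ⟨hc4, hsub, hp, hq, hpq, hadj, hdeg⟩, huc, hvc⟩
  · -- emerald case
    have hsubS : s ⊆ S := fun c hc => (Finset.mem_inter.1 (hsub hc)).2
    refine ⟨s, Or.inr ⟨hc3, fun c hc => (Finset.mem_inter.1 (hsub hc)).1, ?_, ?_⟩,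
      hsubS⟩
    · intro c hc d hd hcd
      refine hadjt c d (hadj c hc d hd hcd) ?_ ?_
      · rintro ⟨h1, -⟩; exact hus (h1 ▸ hc)
      · rintro ⟨h1, -⟩; exact hvs (h1 ▸ hc)
    · intro c hc
      have hcS : c ∈ S := hsubS hc
      have hcu : c ≠ u := fun h => hus (h ▸ hc)
      have hcv : c ≠ v := fun h => hvs (h ▸ hc)
      rw [← hdegi c hcS hcu hcv]
      exact hdeg c hc
  · -- diamond case
    have hsubS : s ⊆ S := fun c hc => (Finset.mem_inter.1 (hsub hc)).2
    refine ⟨s, Or.inl ⟨hc4, fun c hc => (Finset.mem_inter.1 (hsub hc)).1,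
      p, hp, q, hq, hpq, ?_, ?_⟩, hsubS⟩
    · intro c hc d hd hcd h1 h2
      refine hadjt c d (hadj c hc d hd hcd h1 h2) ?_ ?_
      · rintro ⟨hcu', hdv'⟩
        have hup : u = p ∨ u = q := huc (hcu' ▸ hc)
        have hvq : v = p ∨ v = q := hvc (hdv' ▸ hd)
        rcases hup with h3 | h3 <;> rcases hvq with h4 | h4
        · exact huv (h3.trans h4.symm)
        · exact h1 ⟨hcu'.trans h3, hdv'.trans h4⟩
        · exact h2 ⟨hcu'.trans h3, hdv'.trans h4⟩
        · exact huv (h3.trans h4.symm)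
      · rintro ⟨hcv', hdu'⟩
        have hup : u = p ∨ u = q := huc (hdu' ▸ hd)
        have hvq : v = p ∨ v = q := hvc (hcv' ▸ hc)
        rcases hup with h3 | h3 <;> rcases hvq with h4 | h4
        · exact huv (h3.trans h4.symm)
        · exact h2 ⟨hcv'.trans h4, hdu'.trans h3⟩
        · exact h1 ⟨hcv'.trans h4, hdu'.trans h3⟩
        · exact huv (h3.trans h4.symm)
    · intro c hc hcp hcq
      have hcu : c ≠ u := by
        rintro rfl
        rcases huc hc with h' | h'
        · exact hcp h'
        · exact hcq h'
      have hcv : c ≠ v := by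
        rintro rfl
        rcases hvc hc with h' | h'
        · exact hcp h'
        · exact hcq h'
      rw [← hdegi c (hsubS hc) hcu hcv]
      exact hdeg c hc hcp hcq
end

section
/- Let D be a 4-Ore digraph obtained from a copy J of the bidirected K4 by successive Ore-compositions with 4-Ore digraphs, where the vertices and digons of J always remain on the digon side. Let [u,v] be a digon inside the subdigraph induced on V(J). Then in every 3-dicolouring of D with the digon [u,v] removed, the vertices of J receive pairwise distinct colours, except for u and v (which may share a colour). -/
open Dgr

/-- `Ore4From J D`: `D` is obtained from `J` by successive Ore-compositions with
4-Ore digraphs, with `J` always on the digon side. -/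
inductive Ore4From (J : Dgr) : Dgr → Prop
  | base : Ore4From J J
  | comp (D1 D2 D : Dgr) : Ore4From J D1 → IsOre4 D2 → Dgr.IsOreComp D1 D2 D →
      Ore4From J D

lemma oreComp_bidi {D1 D2 D : Dgr} (hOC : Dgr.IsOreComp D1 D2 D) : Dgr.Bidirected D := by
  obtain ⟨hb1, hb2, hdisj, x, y, z, Z1, Z2, hx, hy, hxy, hxyA, hz, hZ, hZd, hZ1n, hZ2n, hV, hA⟩ :=
    hOC
  intro p q hpq
  rw [hA] at hpq
  rw [hA]
  rcases hpq with ⟨h, h1, h2⟩ | ⟨h, h1, h2⟩ | ⟨h1, h2, h3⟩ | ⟨h1, h2, h3⟩ | ⟨h1, h2, h3⟩ |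
      ⟨h1, h2, h3⟩
  · exact Or.inl ⟨hb1 h, fun ⟨a, b⟩ => h2 ⟨b, a⟩, fun ⟨a, b⟩ => h1 ⟨b, a⟩⟩
  · exact Or.inr (Or.inl ⟨hb2 h, h2, h1⟩)
  · exact Or.inr (Or.inr (Or.inr (Or.inl ⟨h1, h2, hb2 h3⟩)))
  · exact Or.inr (Or.inr (Or.inl ⟨h1, h2, hb2 h3⟩))
  · exact Or.inr (Or.inr (Or.inr (Or.inr (Or.inr ⟨h1, h2, hb2 h3⟩))))
  · exact Or.inr (Or.inr (Or.inr (Or.inr (Or.inl ⟨h1, h2, hb2 h3⟩))))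

/-- No 4-Ore digraph has a proper 3-colouring (no dicolouring of the underlying
bidirected structure): every 3-colouring has a monochromatic arc. -/
lemma ore4_not3col {D : Dgr} (h : IsOre4 D) :
    ∀ φ : ℕ → Fin 3, ∃ p q, D.Adj p q ∧ φ p = φ q := by
  induction h with
  | k4 D hD =>
    intro φ
    obtain ⟨p, hp, q, hq, hne, heq⟩ :=
      Finset.exists_ne_map_eq_of_card_lt_of_maps_to
        (s := D.verts) (t := (Finset.univ : Finset (Fin 3))) (f := φ)
        (by rw [hD.1]; simp) (fun a _ => Finset.mem_univ (φ a))
    exact ⟨p, q, hD.2 p hp q hq hne, heq⟩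
  | comp D1 D2 D h1 h2 hOC ih1 ih2 =>
    intro φ
    by_contra hcon
    push_neg at hcon
    obtain ⟨hb1, hb2, hdisj, x, y, z, Z1, Z2, hx, hy, hxy, hxyA, hz, hZ, hZd, hZ1n, hZ2n, hV,
      hA⟩ := hOC
    have hmemZ : ∀ w, D2.Adj z w → w ∈ Z1 ∪ Z2 := by
      intro w hw; rw [hZ]; exact hw
    by_cases hc : φ x = φ y
    · set ψ : ℕ → Fin 3 := fun w => if w = z then φ x else φ w with hψ
      obtain ⟨p, q, hpq, hval⟩ := ih2 ψ
      have hpq' : p ≠ q := fun e => D2.adj_irrefl q (e ▸ hpq)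
      by_cases hp : p = z
      · have hqz : q ≠ z := fun e => hpq' (hp.trans e.symm)
        have hval' : φ x = φ q := by
          simp only [hψ] at hval; rw [if_pos hp, if_neg hqz] at hval; exact hval
        rw [hp] at hpq
        rcases hmemZ q hpq with hq1 | hq1
        · exact hcon x q ((hA x q).2 (Or.inr (Or.inr (Or.inl ⟨rfl, hq1, hpq⟩)))) hval'
        · exact hcon y q ((hA y q).2 (Or.inr (Or.inr (Or.inr (Or.inr (Or.inl
            ⟨rfl, hq1, hpq⟩)))))) (hc.symm.trans hval')
      · by_cases hq : q = z
        · have hval' : φ p = φ x := by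
            simp only [hψ] at hval; rw [if_neg hp, if_pos hq] at hval; exact hval
          rw [hq] at hpq
          rcases hmemZ p (hb2 hpq) with hp1 | hp1
          · exact hcon p x ((hA p x).2 (Or.inr (Or.inr (Or.inr (Or.inl
              ⟨rfl, hp1, hpq⟩))))) hval'
          · exact hcon p y ((hA p y).2 (Or.inr (Or.inr (Or.inr (Or.inr (Or.inr
              ⟨rfl, hp1, hpq⟩)))))) (hval'.trans hc)
        · have hval' : φ p = φ q := by
            simp only [hψ] at hval; rw [if_neg hp, if_neg hq] at hval; exact hval
          exact hcon p q ((hA p q).2 (Or.inr (Or.inl ⟨hpq, hp, hq⟩))) hval'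
    · obtain ⟨p, q, hpq, hval⟩ := ih1 φ
      by_cases e1 : p = x ∧ q = y
      · exact hc (e1.1 ▸ e1.2 ▸ hval)
      by_cases e2 : p = y ∧ q = x
      · exact hc ((e2.1 ▸ e2.2 ▸ hval).symm)
      exact hcon p q ((hA p q).2 (Or.inl ⟨hpq, e1, e2⟩)) hval

lemma ore4from_subset {J D : Dgr} (h : Ore4From J D) : J.verts ⊆ D.verts := by
  induction h with
  | base => exact Finset.Subset.refl _
  | comp D1 D2 D h1 h2 hOC ih =>
    obtain ⟨_, _, _, x, y, z, Z1, Z2, _, _, _, _, _, _, _, _, _, hV, _⟩ := hOC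
    rw [hV]; exact ih.trans Finset.subset_union_left

lemma ore4from_bidi {J D : Dgr} (hJ : Dgr.Bidirected J) (h : Ore4From J D) :
    Dgr.Bidirected D := by
  induction h with
  | base => exact hJ
  | comp D1 D2 D h1 h2 hOC ih => exact oreComp_bidi hOC

lemma ore4from_main {J : Dgr} (hJ : Dgr.IsBidirComplete 4 J) {D : Dgr} (h : Ore4From J D) :
    ∀ u v : ℕ, u ∈ J.verts → v ∈ J.verts → u ≠ v → D.Adj u v →
    ∀ φ : ℕ → Fin 3,
      (∀ p q, D.Adj p q → ¬(p = u ∧ q = v) → ¬(p = v ∧ q = u) → φ p ≠ φ q) →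
      ∀ a ∈ J.verts, ∀ b ∈ J.verts, a ≠ b → φ a = φ b →
        (a = u ∧ b = v) ∨ (a = v ∧ b = u) := by
  induction h with
  | base =>
    intro u v hu hv huv hAdj φ hproper a ha b hb hab heq
    by_contra hcon
    push_neg at hcon
    exact hproper a b (hJ.2 a ha b hb hab)
      (fun ⟨e1, e2⟩ => hcon.1 e1 e2) (fun ⟨e1, e2⟩ => hcon.2 e1 e2) heq
  | comp D1 D2 D h1 h2 hOC ih =>
    intro u v hu hv huv hAdj φ hproper a ha b hb hab heq
    obtain ⟨hb1, hb2, hdisj, x, y, z, Z1, Z2, hx, hy, hxy, hxyA, hz, hZ, hZd, hZ1n, hZ2n, hV,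
      hA⟩ := hOC
    have hsub : J.verts ⊆ D1.verts := ore4from_subset h1
    have hnd2 : ∀ w ∈ D1.verts, w ∉ D2.verts := fun w hw hw2 =>
      (Finset.disjoint_left.1 hdisj) hw hw2
    have hu1 := hsub hu
    have hv1 := hsub hv
    have hmemZ : ∀ w, D2.Adj z w → w ∈ Z1 ∪ Z2 := by
      intro w hw; rw [hZ]; exact hw
    -- the digon [u,v] survives in D1 and is not the replaced digon [x,y]
    have hAdj1 : D1.Adj u v := by
      rw [hA] at hAdj
      rcases hAdj with ⟨h', _, _⟩ | ⟨h', _, _⟩ | ⟨_, _, h3⟩ | ⟨_, _, h3⟩ | ⟨_, _, h3⟩ |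
          ⟨_, _, h3⟩
      · exact h'
      · exact absurd (D2.adj_mem h').1 (hnd2 u hu1)
      · exact absurd (D2.adj_mem h3).2 (hnd2 v hv1)
      · exact absurd (D2.adj_mem h3).1 (hnd2 u hu1)
      · exact absurd (D2.adj_mem h3).2 (hnd2 v hv1)
      · exact absurd (D2.adj_mem h3).1 (hnd2 u hu1)
    by_cases hc : φ x = φ y
    · -- then φ (with z coloured φ x) would properly 3-colour D2: contradiction
      exfalso
      set ψ : ℕ → Fin 3 := fun w => if w = z then φ x else φ w with hψ
      obtain ⟨p, q, hpq, hval⟩ := ore4_not3col h2 ψ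
      have hpq' : p ≠ q := fun e => D2.adj_irrefl q (e ▸ hpq)
      have hnotu : ∀ w, w ∈ D2.verts → w ≠ u := fun w hw e => hnd2 u hu1 (e ▸ hw)
      have hnotv : ∀ w, w ∈ D2.verts → w ≠ v := fun w hw e => hnd2 v hv1 (e ▸ hw)
      by_cases hp : p = z
      · have hqz : q ≠ z := fun e => hpq' (hp.trans e.symm)
        have hval' : φ x = φ q := by
          simp only [hψ] at hval; rw [if_pos hp, if_neg hqz] at hval; exact hval
        rw [hp] at hpq
        have hq2 := (D2.adj_mem hpq).2
        rcases hmemZ q hpq with hq1 | hq1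
        · exact hproper x q ((hA x q).2 (Or.inr (Or.inr (Or.inl ⟨rfl, hq1, hpq⟩))))
            (fun ⟨_, e2⟩ => hnotv q hq2 e2) (fun ⟨_, e2⟩ => hnotu q hq2 e2) hval'
        · exact hproper y q ((hA y q).2 (Or.inr (Or.inr (Or.inr (Or.inr (Or.inl
            ⟨rfl, hq1, hpq⟩))))))
            (fun ⟨_, e2⟩ => hnotv q hq2 e2) (fun ⟨_, e2⟩ => hnotu q hq2 e2)
            (hc.symm.trans hval')
      · by_cases hq : q = z
        · have hval' : φ p = φ x := by
            simp only [hψ] at hval; rw [if_neg hp, if_pos hq] at hval; exact hval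
          rw [hq] at hpq
          have hp2 := (D2.adj_mem hpq).1
          rcases hmemZ p (hb2 hpq) with hp1 | hp1
          · exact hproper p x ((hA p x).2 (Or.inr (Or.inr (Or.inr (Or.inl
              ⟨rfl, hp1, hpq⟩)))))
              (fun ⟨e1, _⟩ => hnotu p hp2 e1) (fun ⟨e1, _⟩ => hnotv p hp2 e1) hval'
          · exact hproper p y ((hA p y).2 (Or.inr (Or.inr (Or.inr (Or.inr (Or.inr
              ⟨rfl, hp1, hpq⟩))))))
              (fun ⟨e1, _⟩ => hnotu p hp2 e1) (fun ⟨e1, _⟩ => hnotv p hp2 e1)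
              (hval'.trans hc)
        · have hval' : φ p = φ q := by
            simp only [hψ] at hval; rw [if_neg hp, if_neg hq] at hval; exact hval
          have hp2 := (D2.adj_mem hpq).1
          exact hproper p q ((hA p q).2 (Or.inr (Or.inl ⟨hpq, hp, hq⟩)))
            (fun ⟨e1, _⟩ => hnotu p hp2 e1) (fun ⟨e1, _⟩ => hnotv p hp2 e1) hval'
    · -- φ is proper on D1 minus the digon [u,v]; apply the induction hypothesis
      have hproper1 : ∀ p q, D1.Adj p q → ¬(p = u ∧ q = v) → ¬(p = v ∧ q = u) →
          φ p ≠ φ q := by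
        intro p q hpq e1 e2
        by_cases f1 : p = x ∧ q = y
        · obtain ⟨rfl, rfl⟩ := f1; exact hc
        by_cases f2 : p = y ∧ q = x
        · obtain ⟨rfl, rfl⟩ := f2; exact fun e => hc e.symm
        exact hproper p q ((hA p q).2 (Or.inl ⟨hpq, f1, f2⟩)) e1 e2
      exact ih u v hu hv huv hAdj1 φ hproper1 a ha b hb hab heq

/-- if `D` is obtained from a copy `J` of the bidirected `K4` by
successive Ore-compositions (with `J` on the digon side), and `[u,v]` is a digon
of `D` inside `V(J)`, then in any 3-dicolouring of `D` minus the digon `[u,v]`,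
the vertices of `J` get pairwise distinct colours, except possibly `u` and `v`. -/
theorem stmt_10 (J D : Dgr) (hJ : Dgr.IsBidirComplete 4 J) (h : Ore4From J D)
    (u v : ℕ) (hu : u ∈ J.verts) (hv : v ∈ J.verts) (huv : u ≠ v)
    (huv1 : D.Adj u v) (huv2 : D.Adj v u)
    (φ : ℕ → Fin 3) (hφ : (D.delDigon u v).IsDicol φ) :
    ∀ a ∈ J.verts, ∀ b ∈ J.verts, a ≠ b → φ a = φ b →
      ((a = u ∧ b = v) ∨ (a = v ∧ b = u)) := by
  intro a ha b hb hab heq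
  have hbJ : Dgr.Bidirected J := by
    intro p q hpq
    have hp := (J.adj_mem hpq).1
    have hq := (J.adj_mem hpq).2
    have hne : p ≠ q := fun e => J.adj_irrefl q (e ▸ hpq)
    exact hJ.2 q hq p hp hne.symm
  have hbD : Dgr.Bidirected D := ore4from_bidi hbJ h
  have hproper : ∀ p q, D.Adj p q → ¬(p = u ∧ q = v) → ¬(p = v ∧ q = u) → φ p ≠ φ q := by
    intro p q hpq h1 h2 heq'
    have e1 : (D.delDigon u v).Adj p q := ⟨hpq, h1, h2⟩
    have e2 : (D.delDigon u v).Adj q p :=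
      ⟨hbD hpq, fun ⟨a1, a2⟩ => h2 ⟨a2, a1⟩, fun ⟨a1, a2⟩ => h1 ⟨a2, a1⟩⟩
    exact hφ p (Relation.TransGen.head ⟨e1, heq'⟩ (Relation.TransGen.single ⟨e2, heq'.symm⟩))
  exact ore4from_main hJ h u v hu hv huv huv1 φ hproper a ha b hb hab heq
end

section
/- If D is a 4-Ore digraph and R is a subdigraph of D with 0 < n(R) < n(D), then (10/3)n(R) − m(R) ≥ 10/3. -/
open Dgr

section Aux

open Classical in
/-- the arc set of a digraph, as a `Finset` -/
noncomputable def Dgr.arcsF (D : Dgr) : Finset (ℕ × ℕ) :=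
  (D.verts ×ˢ D.verts).filter fun p => D.Adj p.1 p.2

open Classical in
lemma Dgr.mem_arcsF {D : Dgr} {p : ℕ × ℕ} : p ∈ D.arcsF ↔ D.Adj p.1 p.2 := by
  constructor
  · intro h
    exact (Finset.mem_filter.1 h).2
  · intro h
    exact Finset.mem_filter.2 ⟨Finset.mem_product.2 ⟨(D.adj_mem h).1, (D.adj_mem h).2⟩, h⟩

lemma Dgr.nA_eq_card (D : Dgr) : D.nA = D.arcsF.card := by
  have : {p : ℕ × ℕ | D.Adj p.1 p.2} = (D.arcsF : Set (ℕ × ℕ)) := by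
    ext p; simp [Dgr.mem_arcsF]
  rw [Dgr.nA, this, Set.ncard_coe_finset]

lemma Dgr.arcsF_induce_subset_offDiag (D : Dgr) (S : Finset ℕ) :
    (D.induce S).arcsF ⊆ S.offDiag := by
  intro p hp
  rw [Dgr.mem_arcsF] at hp
  obtain ⟨hadj, h1, h2⟩ := hp
  refine Finset.mem_offDiag.2 ⟨h1, h2, ?_⟩
  intro he
  rw [he] at hadj
  exact D.adj_irrefl _ hadj

lemma Dgr.mem_arcsF_induce {D : Dgr} {S : Finset ℕ} {p : ℕ × ℕ} :
    p ∈ (D.induce S).arcsF ↔ D.Adj p.1 p.2 ∧ p.1 ∈ S ∧ p.2 ∈ S := by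
  rw [Dgr.mem_arcsF]; rfl

lemma Dgr.arcsF_induce_empty_card (D : Dgr) {S : Finset ℕ} (hS : S.card = 0) :
    (D.induce S).arcsF.card = 0 := by
  have h := Finset.card_le_card (D.arcsF_induce_subset_offDiag S)
  rw [Finset.offDiag_card, hS] at h
  omega

lemma Dgr.arcsF_induce_full (D : Dgr) : (D.induce D.verts).arcsF = D.arcsF := by
  ext p
  rw [Dgr.mem_arcsF_induce, Dgr.mem_arcsF]
  exact ⟨fun h => h.1, fun h => ⟨h, (D.adj_mem h).1, (D.adj_mem h).2⟩⟩


lemma Dgr.zbound (D2 : Dgr) (hb2 : Dgr.Bidirected D2) (z : ℕ) (N : Finset ℕ)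
    (hN : ∀ v ∈ N, D2.Adj z v) (T : Finset ℕ) (hzT : z ∉ T) :
    (D2.induce T).arcsF.card + 2 * (T ∩ N).card ≤ (D2.induce (insert z T)).arcsF.card := by
  classical
  set W := T ∩ N with hW
  set B := (D2.induce T).arcsF with hB
  set P := W.image (fun v => (z, v)) ∪ W.image (fun v => (v, z)) with hP
  have hWT : W ⊆ T := Finset.inter_subset_left
  have hWN : W ⊆ N := Finset.inter_subset_right
  have hPsub : P ⊆ (D2.induce (insert z T)).arcsF := by
    intro p hp
    rcases Finset.mem_union.1 hp with hp | hp <;> obtain ⟨v, hv, rfl⟩ := Finset.mem_image.1 hp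
    · exact Dgr.mem_arcsF_induce.2 ⟨hN v (hWN hv), Finset.mem_insert_self _ _,
        Finset.mem_insert_of_mem (hWT hv)⟩
    · exact Dgr.mem_arcsF_induce.2 ⟨hb2 (hN v (hWN hv)), Finset.mem_insert_of_mem (hWT hv),
        Finset.mem_insert_self _ _⟩
  have hBsub : B ⊆ (D2.induce (insert z T)).arcsF := by
    intro p hp
    obtain ⟨ha, h1, h2⟩ := Dgr.mem_arcsF_induce.1 hp
    exact Dgr.mem_arcsF_induce.2 ⟨ha, Finset.mem_insert_of_mem h1, Finset.mem_insert_of_mem h2⟩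
  have hBP : Disjoint B P := by
    rw [Finset.disjoint_left]
    intro p hpB hpP
    obtain ⟨ha, h1, h2⟩ := Dgr.mem_arcsF_induce.1 hpB
    rcases Finset.mem_union.1 hpP with hp | hp <;> obtain ⟨v, hv, he⟩ := Finset.mem_image.1 hp
    · rw [← he] at h1; exact hzT h1
    · rw [← he] at h2; exact hzT h2
  have hinj1 : Function.Injective (fun v : ℕ => (z, v)) := fun a b hab => by simpa using hab
  have hinj2 : Function.Injective (fun v : ℕ => (v, z)) := fun a b hab => by simpa using hab
  have hPd : Disjoint (W.image fun v => (z, v)) (W.image fun v => (v, z)) := by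
    rw [Finset.disjoint_left]
    intro p hp1 hp2
    obtain ⟨v, hv, he⟩ := Finset.mem_image.1 hp1
    obtain ⟨w, hw, he2⟩ := Finset.mem_image.1 hp2
    rw [← he2] at he
    have hzw : z = w := congrArg Prod.fst he
    exact hzT (hWT (hzw ▸ hw))
  have hPcard : P.card = 2 * W.card := by
    rw [hP, Finset.card_union_of_disjoint hPd, Finset.card_image_of_injective _ hinj1,
      Finset.card_image_of_injective _ hinj2]
    ring
  calc B.card + 2 * W.card = (B ∪ P).card := by
        rw [Finset.card_union_of_disjoint hBP, hPcard]
    _ ≤ _ := Finset.card_le_card (Finset.union_subset hBsub hPsub)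


lemma ore4_key : ∀ D : Dgr, IsOre4 D →
    (3 * D.arcsF.card + 4 ≤ 10 * D.verts.card) ∧
    (∀ S : Finset ℕ, S ⊆ D.verts → S.Nonempty → S.card < D.verts.card →
      3 * (D.induce S).arcsF.card + 10 ≤ 10 * S.card) := by
  intro D h
  induction h with
  | k4 D hD =>
    obtain ⟨hc4, hcadj⟩ := hD
    constructor
    · have h1 : D.arcsF ⊆ D.verts.offDiag := by
        rw [← D.arcsF_induce_full]; exact D.arcsF_induce_subset_offDiag _
      have h2 := Finset.card_le_card h1
      rw [Finset.offDiag_card, hc4] at h2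
      rw [hc4]; omega
    · intro S hS hne hlt
      have h1 := Finset.card_le_card (D.arcsF_induce_subset_offDiag S)
      rw [Finset.offDiag_card] at h1
      rw [hc4] at hlt
      have hge : 1 ≤ S.card := Finset.card_pos.2 hne
      have h2 : S.card = 1 ∨ S.card = 2 ∨ S.card = 3 := by omega
      rcases h2 with h2 | h2 | h2 <;> rw [h2] at h1 ⊢ <;> omega
  | comp D1 D2 D h1 h2 hcomp IH1 IH2 =>
    classical
    obtain ⟨hb1, hb2, hdisj, x, y, z, Z1, Z2, hx1, hy1, hxy, haxy, hz2, hZ, hZd,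
      hZ1ne, hZ2ne, hverts, hadj⟩ := hcomp
    have hZ1adj : ∀ v ∈ Z1, D2.Adj z v := fun v hv => by
      have hm : v ∈ Z1 ∪ Z2 := Or.inl hv
      rw [hZ] at hm; exact hm
    have hZ2adj : ∀ v ∈ Z2, D2.Adj z v := fun v hv => by
      have hm : v ∈ Z1 ∪ Z2 := Or.inr hv
      rw [hZ] at hm; exact hm
    set Z1f : Finset ℕ := D2.verts.filter (· ∈ Z1) with hZ1fdef
    set Z2f : Finset ℕ := D2.verts.filter (· ∈ Z2) with hZ2fdef
    have hmZ1f : ∀ v, v ∈ Z1f ↔ v ∈ Z1 := fun v => by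
      rw [hZ1fdef, Finset.mem_filter]
      exact ⟨fun h => h.2, fun h => ⟨(D2.adj_mem (hZ1adj v h)).2, h⟩⟩
    have hmZ2f : ∀ v, v ∈ Z2f ↔ v ∈ Z2 := fun v => by
      rw [hZ2fdef, Finset.mem_filter]
      exact ⟨fun h => h.2, fun h => ⟨(D2.adj_mem (hZ2adj v h)).2, h⟩⟩
    have hNadj : ∀ v ∈ Z1f ∪ Z2f, D2.Adj z v := by
      intro v hv
      rcases Finset.mem_union.1 hv with hv | hv
      · exact hZ1adj v ((hmZ1f v).1 hv)
      · exact hZ2adj v ((hmZ2f v).1 hv)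
    have hzZ1f : z ∉ Z1f := fun h => D2.adj_irrefl z (hZ1adj z ((hmZ1f z).1 h))
    have hzZ2f : z ∉ Z2f := fun h => D2.adj_irrefl z (hZ2adj z ((hmZ2f z).1 h))
    have hZfd : Disjoint Z1f Z2f := Finset.disjoint_left.2 fun v hv hv2 =>
      (Set.disjoint_left.1 hZd ((hmZ1f v).1 hv)) ((hmZ2f v).1 hv2)
    have hZ1fne : 0 < Z1f.card := by
      obtain ⟨v, hv⟩ := hZ1ne
      exact Finset.card_pos.2 ⟨v, (hmZ1f v).2 hv⟩
    have hZ2fne : 0 < Z2f.card := by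
      obtain ⟨v, hv⟩ := hZ2ne
      exact Finset.card_pos.2 ⟨v, (hmZ2f v).2 hv⟩
    have hxV2 : x ∉ D2.verts := Finset.disjoint_left.1 hdisj hx1
    have hyV2 : y ∉ D2.verts := Finset.disjoint_left.1 hdisj hy1
    have hzV1 : z ∉ D1.verts := Finset.disjoint_right.1 hdisj hz2
    have hn2pos : 0 < D2.verts.card := Finset.card_pos.2 ⟨z, hz2⟩
    have hn1pos : 0 < D1.verts.card := Finset.card_pos.2 ⟨x, hx1⟩
    have hvD : D.verts.card = D1.verts.card + (D2.verts.card - 1) := by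
      rw [hverts, Finset.card_union_of_disjoint
        (Finset.disjoint_of_subset_right (Finset.erase_subset _ _) hdisj),
        Finset.card_erase_of_mem hz2]
    set Dig : Finset (ℕ × ℕ) := {(x, y), (y, x)} with hDig
    have hDigcard : Dig.card = 2 :=
      Finset.card_pair (fun h => hxy (congrArg Prod.fst h))
    have hmemDig : ∀ p : ℕ × ℕ, p ∈ Dig ↔ p = (x, y) ∨ p = (y, x) := fun p => by
      rw [hDig, Finset.mem_insert, Finset.mem_singleton]
    constructor
    · -- part 1 : arc count of the full composition
      set B := (D2.induce (D2.verts.erase z)).arcsF with hBdef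
      have hzb := Dgr.zbound D2 hb2 z (Z1f ∪ Z2f) hNadj (D2.verts.erase z)
        (Finset.notMem_erase z _)
      rw [Finset.insert_erase hz2, Dgr.arcsF_induce_full] at hzb
      have hWfull : (D2.verts.erase z) ∩ (Z1f ∪ Z2f) = Z1f ∪ Z2f := by
        apply Finset.inter_eq_right.2
        intro v hv
        refine Finset.mem_erase.2 ⟨?_, ?_⟩
        · intro he
          rcases Finset.mem_union.1 hv with hv | hv
          · exact hzZ1f (he ▸ hv)
          · exact hzZ2f (he ▸ hv)
        · rcases Finset.mem_union.1 hv with hv | hv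
          · exact (D2.adj_mem (hZ1adj v ((hmZ1f v).1 hv))).2
          · exact (D2.adj_mem (hZ2adj v ((hmZ2f v).1 hv))).2
      rw [hWfull, Finset.card_union_of_disjoint hZfd, ← hBdef] at hzb
      set Ux := Z1f.image (fun v => (x, v)) ∪ Z1f.image (fun v => (v, x)) with hUxdef
      set Uy := Z2f.image (fun v => (y, v)) ∪ Z2f.image (fun v => (v, y)) with hUydef
      have hUxcard : Ux.card ≤ 2 * Z1f.card := by
        refine (Finset.card_union_le _ _).trans ?_
        have := Finset.card_image_le (s := Z1f) (f := fun v => (x, v))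
        have := Finset.card_image_le (s := Z1f) (f := fun v => (v, x))
        omega
      have hUycard : Uy.card ≤ 2 * Z2f.card := by
        refine (Finset.card_union_le _ _).trans ?_
        have := Finset.card_image_le (s := Z2f) (f := fun v => (y, v))
        have := Finset.card_image_le (s := Z2f) (f := fun v => (v, y))
        omega
      have hDigsub1 : Dig ⊆ D1.arcsF := by
        intro p hp
        rcases (hmemDig p).1 hp with h | h <;> rw [h, Dgr.mem_arcsF]
        · exact haxy
        · exact hb1 haxy
      have hsd : (D1.arcsF \ Dig).card = D1.arcsF.card - 2 := by
        rw [Finset.card_sdiff_of_subset hDigsub1, hDigcard]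
      have h2le : 2 ≤ D1.arcsF.card := hDigcard ▸ Finset.card_le_card hDigsub1
      have hsub : D.arcsF ⊆ ((D1.arcsF \ Dig) ∪ B ∪ Ux ∪ Uy) := by
        intro p hp
        have hpD := Dgr.mem_arcsF.1 hp
        simp only [Finset.mem_union]
        rcases (hadj p.1 p.2).1 hpD with ⟨ha, hnd1, hnd2⟩ | ⟨ha, hu, hv⟩ |
          ⟨hu, hv, ha⟩ | ⟨hv, hu, ha⟩ | ⟨hu, hv, ha⟩ | ⟨hv, hu, ha⟩
        · refine Or.inl (Or.inl (Or.inl (Finset.mem_sdiff.2 ⟨Dgr.mem_arcsF.2 ha, ?_⟩)))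
          intro hd
          rcases (hmemDig p).1 hd with h | h
          · exact hnd1 ⟨congrArg Prod.fst h, congrArg Prod.snd h⟩
          · exact hnd2 ⟨congrArg Prod.fst h, congrArg Prod.snd h⟩
        · refine Or.inl (Or.inl (Or.inr (Dgr.mem_arcsF_induce.2 ⟨ha, ?_, ?_⟩)))
          · exact Finset.mem_erase.2 ⟨hu, (D2.adj_mem ha).1⟩
          · exact Finset.mem_erase.2 ⟨hv, (D2.adj_mem ha).2⟩
        · exact Or.inl (Or.inr (Finset.mem_union_left _
            (Finset.mem_image.2 ⟨p.2, (hmZ1f _).2 hv, by rw [← hu]⟩)))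
        · exact Or.inl (Or.inr (Finset.mem_union_right _
            (Finset.mem_image.2 ⟨p.1, (hmZ1f _).2 hu, by rw [← hv]⟩)))
        · exact Or.inr (Finset.mem_union_left _
            (Finset.mem_image.2 ⟨p.2, (hmZ2f _).2 hv, by rw [← hu]⟩))
        · exact Or.inr (Finset.mem_union_right _
            (Finset.mem_image.2 ⟨p.1, (hmZ2f _).2 hu, by rw [← hv]⟩))
      have hm := Finset.card_le_card hsub
      have hc1 := Finset.card_union_le ((D1.arcsF \ Dig) ∪ B ∪ Ux) Uy
      have hc2 := Finset.card_union_le ((D1.arcsF \ Dig) ∪ B) Ux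
      have hc3 := Finset.card_union_le (D1.arcsF \ Dig) B
      have hi1 := IH1.1
      have hi2 := IH2.1
      omega
    · -- part 2 : proper induced subdigraphs
      intro S hS hne hlt
      set S1 := S ∩ D1.verts with hS1def
      set S2 := S ∩ D2.verts.erase z with hS2def
      have hzS : z ∉ S := by
        intro h
        have hm := hS h
        rw [hverts] at hm
        rcases Finset.mem_union.1 hm with h' | h'
        · exact hzV1 h'
        · exact (Finset.mem_erase.1 h').1 rfl
      have hSsplit : S = S1 ∪ S2 := by
        rw [hS1def, hS2def, ← Finset.inter_union_distrib_left, ← hverts]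
        exact (Finset.inter_eq_left.2 hS).symm
      have hS12d : Disjoint S1 S2 := by
        refine Finset.disjoint_of_subset_left Finset.inter_subset_right ?_
        refine Finset.disjoint_of_subset_right Finset.inter_subset_right ?_
        exact Finset.disjoint_of_subset_right (Finset.erase_subset _ _) hdisj
      have hscard : S.card = S1.card + S2.card := by
        rw [hSsplit]; exact Finset.card_union_of_disjoint hS12d
      have hS1sub : S1 ⊆ D1.verts := Finset.inter_subset_right
      have hS2sub : S2 ⊆ D2.verts.erase z := Finset.inter_subset_right
      have hzS2 : z ∉ S2 := fun h => (Finset.mem_erase.1 (hS2sub h)).1 rfl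
      set W1 := S2 ∩ Z1f with hW1def
      set W2 := S2 ∩ Z2f with hW2def
      set S2' := insert z S2 with hS2'def
      have hzb := Dgr.zbound D2 hb2 z (Z1f ∪ Z2f) hNadj S2 hzS2
      have hWsplit : S2 ∩ (Z1f ∪ Z2f) = W1 ∪ W2 := by
        rw [hW1def, hW2def, Finset.inter_union_distrib_left]
      have hW12d : Disjoint W1 W2 := by
        refine Finset.disjoint_of_subset_left Finset.inter_subset_right ?_
        exact Finset.disjoint_of_subset_right Finset.inter_subset_right hZfd
      rw [hWsplit, Finset.card_union_of_disjoint hW12d, ← hS2'def] at hzb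
      set UxS := W1.image (fun v => (x, v)) ∪ W1.image (fun v => (v, x)) with hUxSdef
      set UyS := W2.image (fun v => (y, v)) ∪ W2.image (fun v => (v, y)) with hUySdef
      have hUxcard : UxS.card ≤ 2 * W1.card := by
        refine (Finset.card_union_le _ _).trans ?_
        have := Finset.card_image_le (s := W1) (f := fun v => (x, v))
        have := Finset.card_image_le (s := W1) (f := fun v => (v, x))
        omega
      have hUycard : UyS.card ≤ 2 * W2.card := by
        refine (Finset.card_union_le _ _).trans ?_
        have := Finset.card_image_le (s := W2) (f := fun v => (y, v))
        have := Finset.card_image_le (s := W2) (f := fun v => (v, y))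
        omega
      -- the main subset relation
      have hsubS : (D.induce S).arcsF ⊆ ((D1.induce S1).arcsF \ Dig) ∪ (D2.induce S2).arcsF
          ∪ (if x ∈ S then UxS else ∅) ∪ (if y ∈ S then UyS else ∅) := by
        intro p hp
        obtain ⟨hpD, hp1S, hp2S⟩ := Dgr.mem_arcsF_induce.1 hp
        simp only [Finset.mem_union]
        rcases (hadj p.1 p.2).1 hpD with ⟨ha, hnd1, hnd2⟩ | ⟨ha, hu, hv⟩ |
          ⟨hu, hv, ha⟩ | ⟨hv, hu, ha⟩ | ⟨hu, hv, ha⟩ | ⟨hv, hu, ha⟩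
        · refine Or.inl (Or.inl (Or.inl (Finset.mem_sdiff.2 ⟨Dgr.mem_arcsF_induce.2
            ⟨ha, Finset.mem_inter.2 ⟨hp1S, (D1.adj_mem ha).1⟩,
              Finset.mem_inter.2 ⟨hp2S, (D1.adj_mem ha).2⟩⟩, ?_⟩)))
          intro hd
          rcases (hmemDig p).1 hd with h | h
          · exact hnd1 ⟨congrArg Prod.fst h, congrArg Prod.snd h⟩
          · exact hnd2 ⟨congrArg Prod.fst h, congrArg Prod.snd h⟩
        · refine Or.inl (Or.inl (Or.inr (Dgr.mem_arcsF_induce.2 ⟨ha, ?_, ?_⟩)))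
          · exact Finset.mem_inter.2 ⟨hp1S, Finset.mem_erase.2 ⟨hu, (D2.adj_mem ha).1⟩⟩
          · exact Finset.mem_inter.2 ⟨hp2S, Finset.mem_erase.2 ⟨hv, (D2.adj_mem ha).2⟩⟩
        · -- u = x, v ∈ Z1
          have hxS : x ∈ S := hu ▸ hp1S
          have hvz : p.2 ≠ z := fun he => D2.adj_irrefl z (he ▸ ha)
          have hvW : p.2 ∈ W1 := Finset.mem_inter.2
            ⟨Finset.mem_inter.2 ⟨hp2S, Finset.mem_erase.2 ⟨hvz, (D2.adj_mem ha).2⟩⟩,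
              (hmZ1f _).2 hv⟩
          refine Or.inl (Or.inr ?_)
          rw [if_pos hxS]
          exact Finset.mem_union_left _ (Finset.mem_image.2 ⟨p.2, hvW, by rw [← hu]⟩)
        · -- v = x, u ∈ Z1
          have hxS : x ∈ S := hv ▸ hp2S
          have huz : p.1 ≠ z := fun he => D2.adj_irrefl z (hb2 (he ▸ ha))
          have huW : p.1 ∈ W1 := Finset.mem_inter.2
            ⟨Finset.mem_inter.2 ⟨hp1S, Finset.mem_erase.2 ⟨huz, (D2.adj_mem ha).1⟩⟩,
              (hmZ1f _).2 hu⟩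
          refine Or.inl (Or.inr ?_)
          rw [if_pos hxS]
          exact Finset.mem_union_right _ (Finset.mem_image.2 ⟨p.1, huW, by rw [← hv]⟩)
        · -- u = y, v ∈ Z2
          have hyS : y ∈ S := hu ▸ hp1S
          have hvz : p.2 ≠ z := fun he => D2.adj_irrefl z (he ▸ ha)
          have hvW : p.2 ∈ W2 := Finset.mem_inter.2
            ⟨Finset.mem_inter.2 ⟨hp2S, Finset.mem_erase.2 ⟨hvz, (D2.adj_mem ha).2⟩⟩,
              (hmZ2f _).2 hv⟩
          refine Or.inr ?_
          rw [if_pos hyS]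
          exact Finset.mem_union_left _ (Finset.mem_image.2 ⟨p.2, hvW, by rw [← hu]⟩)
        · -- v = y, u ∈ Z2
          have hyS : y ∈ S := hv ▸ hp2S
          have huz : p.1 ≠ z := fun he => D2.adj_irrefl z (hb2 (he ▸ ha))
          have huW : p.1 ∈ W2 := Finset.mem_inter.2
            ⟨Finset.mem_inter.2 ⟨hp1S, Finset.mem_erase.2 ⟨huz, (D2.adj_mem ha).1⟩⟩,
              (hmZ2f _).2 hu⟩
          refine Or.inr ?_
          rw [if_pos hyS]
          exact Finset.mem_union_right _ (Finset.mem_image.2 ⟨p.1, huW, by rw [← hv]⟩)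
      have hmS := Finset.card_le_card hsubS
      have hc1 := Finset.card_union_le (((D1.induce S1).arcsF \ Dig) ∪ (D2.induce S2).arcsF
        ∪ (if x ∈ S then UxS else ∅)) (if y ∈ S then UyS else ∅)
      have hc2 := Finset.card_union_le (((D1.induce S1).arcsF \ Dig) ∪ (D2.induce S2).arcsF)
        (if x ∈ S then UxS else ∅)
      have hc3 := Finset.card_union_le ((D1.induce S1).arcsF \ Dig) (D2.induce S2).arcsF
      have hA'le : ((D1.induce S1).arcsF \ Dig).card ≤ (D1.induce S1).arcsF.card :=
        Finset.card_le_card (Finset.sdiff_subset)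
      -- cardinalities of the vertex sets
      have hs2' : S2'.card = S2.card + 1 := by
        rw [hS2'def, Finset.card_insert_of_notMem hzS2]
      have hS2'sub : S2' ⊆ D2.verts := by
        rw [hS2'def]
        intro v hv
        rcases Finset.mem_insert.1 hv with h | h
        · exact h ▸ hz2
        · exact (Finset.erase_subset _ _) (hS2sub h)
      have hs1le : S1.card ≤ D1.verts.card := Finset.card_le_card hS1sub
      have hs2le : S2.card + 1 ≤ D2.verts.card := by
        rw [← hs2']; exact Finset.card_le_card hS2'sub
      -- dichotomy on the D2 side
      have hD2b : 3 * (D2.induce S2').arcsF.card + 10 ≤ 10 * (S2.card + 1) ∨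
          (S2.card + 1 = D2.verts.card ∧ 3 * (D2.induce S2').arcsF.card + 4 ≤ 10 * D2.verts.card
            ∧ 1 ≤ W1.card ∧ 1 ≤ W2.card) := by
        by_cases hfull : S2'.card < D2.verts.card
        · left
          have := IH2.2 S2' hS2'sub ⟨z, Finset.mem_insert_self _ _⟩ hfull
          rw [hs2'] at this
          exact this
        · right
          have heq : S2' = D2.verts := Finset.eq_of_subset_of_card_le hS2'sub (le_of_not_gt hfull)
          have hZ1S2 : Z1f ⊆ S2 := by
            intro v hv
            have hvV : v ∈ D2.verts := (D2.adj_mem (hNadj v (Finset.mem_union_left _ hv))).2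
            have : v ∈ S2' := heq ▸ hvV
            rcases Finset.mem_insert.1 this with h | h
            · exact absurd (h ▸ hv) hzZ1f
            · exact h
          have hZ2S2 : Z2f ⊆ S2 := by
            intro v hv
            have hvV : v ∈ D2.verts := (D2.adj_mem (hNadj v (Finset.mem_union_right _ hv))).2
            have : v ∈ S2' := heq ▸ hvV
            rcases Finset.mem_insert.1 this with h | h
            · exact absurd (h ▸ hv) hzZ2f
            · exact h
          have hW1c : 1 ≤ W1.card := by
            obtain ⟨v, hv⟩ := Finset.card_pos.1 hZ1fne
            exact Finset.card_pos.2 ⟨v, Finset.mem_inter.2 ⟨hZ1S2 hv, hv⟩⟩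
          have hW2c : 1 ≤ W2.card := by
            obtain ⟨v, hv⟩ := Finset.card_pos.1 hZ2fne
            exact Finset.card_pos.2 ⟨v, Finset.mem_inter.2 ⟨hZ2S2 hv, hv⟩⟩
          have hmfull : (D2.induce S2').arcsF = D2.arcsF := by
            rw [heq, Dgr.arcsF_induce_full]
          refine ⟨?_, ?_, hW1c, hW2c⟩
          · rw [← heq, hs2']
          · rw [hmfull]; exact IH2.1
      -- now split on whether x, y belong to S
      by_cases hxS : x ∈ S
      · have hxS1 : x ∈ S1 := Finset.mem_inter.2 ⟨hxS, hx1⟩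
        -- dichotomy on the D1 side
        have hD1b : 3 * (D1.induce S1).arcsF.card + 10 ≤ 10 * S1.card ∨
            (S1.card = D1.verts.card ∧ 3 * (D1.induce S1).arcsF.card + 4 ≤ 10 * D1.verts.card) := by
          by_cases hfull : S1.card < D1.verts.card
          · exact Or.inl (IH1.2 S1 hS1sub ⟨x, hxS1⟩ hfull)
          · have heq : S1 = D1.verts := Finset.eq_of_subset_of_card_le hS1sub (le_of_not_gt hfull)
            have hmfull : (D1.induce S1).arcsF = D1.arcsF := by
              rw [heq, Dgr.arcsF_induce_full]
            exact Or.inr ⟨by rw [heq], by rw [hmfull]; exact IH1.1⟩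
        rw [if_pos hxS] at hmS hc1 hc2
        by_cases hyS : y ∈ S
        · -- both x and y in S : the digon is counted
          have hyS1 : y ∈ S1 := Finset.mem_inter.2 ⟨hyS, hy1⟩
          have hDigsubS : Dig ⊆ (D1.induce S1).arcsF := by
            intro p hp
            rcases (hmemDig p).1 hp with h | h <;> rw [h, Dgr.mem_arcsF_induce]
            · exact ⟨haxy, hxS1, hyS1⟩
            · exact ⟨hb1 haxy, hyS1, hxS1⟩
          have hsdS : ((D1.induce S1).arcsF \ Dig).card = (D1.induce S1).arcsF.card - 2 := by
            rw [Finset.card_sdiff_of_subset hDigsubS, hDigcard]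
          have h2leS : 2 ≤ (D1.induce S1).arcsF.card := hDigcard ▸ Finset.card_le_card hDigsubS
          rw [if_pos hyS] at hmS hc1
          rw [hvD] at hlt
          omega
        · -- x ∈ S, y ∉ S : S1 is a proper subset of D1.verts
          have hyS1 : y ∉ S1 := fun h => hyS (Finset.mem_inter.1 h).1
          have hS1lt : S1.card < D1.verts.card :=
            Finset.card_lt_card ⟨hS1sub, fun hcon => hyS1 (hcon hy1)⟩
          have hD1p : 3 * (D1.induce S1).arcsF.card + 10 ≤ 10 * S1.card :=
            IH1.2 S1 hS1sub ⟨x, hxS1⟩ hS1lt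
          rw [if_neg hyS] at hmS hc1
          rw [Finset.card_empty] at hc1
          rw [hvD] at hlt
          omega
      · rw [if_neg hxS] at hmS hc1 hc2
        rw [Finset.card_empty] at hc2
        have hxS1 : x ∉ S1 := fun h => hxS (Finset.mem_inter.1 h).1
        have hS1lt : S1.card < D1.verts.card :=
          Finset.card_lt_card ⟨hS1sub, fun hcon => hxS1 (hcon hx1)⟩
        by_cases hyS : y ∈ S
        · have hyS1 : y ∈ S1 := Finset.mem_inter.2 ⟨hyS, hy1⟩
          have hD1p : 3 * (D1.induce S1).arcsF.card + 10 ≤ 10 * S1.card :=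
            IH1.2 S1 hS1sub ⟨y, hyS1⟩ hS1lt
          rw [if_pos hyS] at hmS hc1
          rw [hvD] at hlt
          omega
        · -- neither x nor y in S
          rw [if_neg hyS] at hmS hc1
          rw [Finset.card_empty] at hc1
          have hD1p : S1.card = 0 ∨ 3 * (D1.induce S1).arcsF.card + 10 ≤ 10 * S1.card := by
            rcases Nat.eq_zero_or_pos S1.card with h | h
            · exact Or.inl h
            · exact Or.inr (IH1.2 S1 hS1sub (Finset.card_pos.1 h) hS1lt)
          have hD2p : S2.card = 0 ∨ 3 * (D2.induce S2).arcsF.card + 10 ≤ 10 * S2.card := by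
            rcases Nat.eq_zero_or_pos S2.card with h | h
            · exact Or.inl h
            · refine Or.inr (IH2.2 S2 (hS2sub.trans (Finset.erase_subset _ _))
                (Finset.card_pos.1 h) ?_)
              omega
          have hm10 : S1.card = 0 → (D1.induce S1).arcsF.card = 0 :=
            fun h => D1.arcsF_induce_empty_card h
          have hm20 : S2.card = 0 → (D2.induce S2).arcsF.card = 0 :=
            fun h => D2.arcsF_induce_empty_card h
          have hsge : 1 ≤ S.card := Finset.card_pos.2 hne
          rcases hD1p with h1p | h1p <;> rcases hD2p with h2p | h2p
          · have := hm10 h1p; have := hm20 h2p; omega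
          · have := hm10 h1p; omega
          · have := hm20 h2p; omega
          · omega

end Aux

/-- subdigraphs of 4-Ore digraphs with `0 < n(R) < n(D)` satisfy
`(10/3)n(R) − m(R) ≥ 10/3`. -/
theorem stmt_12 (D : Dgr) (h : IsOre4 D) (R : Dgr) (hR : Dgr.Subd R D)
    (h0 : 0 < R.nV) (h1 : R.nV < D.nV) :
    (10 : ℝ) / 3 ≤ 10 / 3 * (R.nV : ℝ) - (R.nA : ℝ) := by
  have h0' : 0 < R.verts.card := h0
  have h1' : R.verts.card < D.verts.card := h1
  have hkey := (ore4_key D h).2 R.verts hR.1 (Finset.card_pos.1 h0') h1'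
  have hsub : {p : ℕ × ℕ | R.Adj p.1 p.2} ⊆ ((D.induce R.verts).arcsF : Set (ℕ × ℕ)) := by
    intro p hp
    simp only [Finset.mem_coe]
    exact Dgr.mem_arcsF_induce.2 ⟨hR.2 hp, (R.adj_mem hp).1, (R.adj_mem hp).2⟩
  have hle : R.nA ≤ (D.induce R.verts).arcsF.card := by
    rw [Dgr.nA]
    calc Set.ncard {p : ℕ × ℕ | R.Adj p.1 p.2}
        ≤ Set.ncard ((D.induce R.verts).arcsF : Set (ℕ × ℕ)) :=
          Set.ncard_le_ncard hsub (Finset.finite_toSet _)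
      _ = (D.induce R.verts).arcsF.card := Set.ncard_coe_finset _
  have hnat : 3 * R.nA + 10 ≤ 10 * R.nV := by
    have : R.nV = R.verts.card := rfl
    omega
  have hcast : (3 : ℝ) * (R.nA : ℝ) + 10 ≤ 10 * (R.nV : ℝ) := by exact_mod_cast hnat
  linarith
end

section
/- Let D be a 4-dicritical digraph, R an induced subdigraph of D with 4 ≤ n(R) < n(D), and φ a 3-dicolouring of R. Then the φ-identification D_φ(R) of R in D is not 3-dicolourable. -/
open Dgr

namespace Dgr

/-- `D'` is the φ-identification of (the induced subdigraph on) `R` in `D`,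
where the three colour classes of `R` are identified to the fresh vertices
`x 0, x 1, x 2`, and the three digons between them are added. -/
def IsIdent (D : Dgr) (R : Finset ℕ) (φ : ℕ → Fin 3) (x : Fin 3 → ℕ) (D' : Dgr) : Prop :=
  Function.Injective x ∧ (∀ i, x i ∉ D.verts) ∧
  D'.verts = (D.verts \ R) ∪ Finset.image x Finset.univ ∧
  ∀ u v, D'.Adj u v ↔
    (D.Adj u v ∧ u ∉ R ∧ v ∉ R) ∨
    (∃ i, u = x i ∧ v ∉ R ∧ ∃ w ∈ R, φ w = i ∧ D.Adj w v) ∨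
    (∃ j, v = x j ∧ u ∉ R ∧ ∃ w ∈ R, φ w = j ∧ D.Adj u w) ∨
    (∃ i j : Fin 3, i ≠ j ∧ u = x i ∧ v = x j)

end Dgr

private lemma split_cycle {α : Type*} {r : α → α → Prop} (S : α → Prop) {a b : α}
    (h : Relation.TransGen r a b) :
    (Relation.TransGen (fun u v => r u v ∧ S u ∧ S v) a b) ∨
    ∃ w, ¬ S w ∧ Relation.ReflTransGen r a w ∧ Relation.ReflTransGen r w b := by
  induction h with
  | @single c hc =>
    by_cases hSa : S a
    · by_cases hSc : S c
      · exact Or.inl (Relation.TransGen.single ⟨hc, hSa, hSc⟩)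
      · exact Or.inr ⟨c, hSc, Relation.ReflTransGen.single hc, Relation.ReflTransGen.refl⟩
    · exact Or.inr ⟨a, hSa, Relation.ReflTransGen.refl, Relation.ReflTransGen.single hc⟩
  | @tail b c hab hbc ih =>
    have hSb : ∀ (h1 : Relation.TransGen (fun u v => r u v ∧ S u ∧ S v) a b), S b := by
      intro h1
      induction h1 with
      | single h => exact h.2.2
      | tail _ h _ => exact h.2.2
    rcases ih with h1 | ⟨w, hw, h1, h2⟩
    · by_cases hSc : S c
      · exact Or.inl (h1.tail ⟨hbc, hSb h1, hSc⟩)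
      · exact Or.inr ⟨c, hSc,
          ((Relation.TransGen.mono (fun u v (h : r u v ∧ S u ∧ S v) => h.1) _ _ h1).to_reflTransGen).tail hbc, Relation.ReflTransGen.refl⟩
    · exact Or.inr ⟨w, hw, h1, h2.tail hbc⟩

/-- the φ-identification of an induced subdigraph of a 4-dicritical
digraph is not 3-dicolourable. -/
theorem stmt_13 (D : Dgr) (hD : Dgr.Dicritical 4 D)
    (R : Finset ℕ) (hRD : R ⊆ D.verts) (hR4 : 4 ≤ R.card) (hRn : R.card < D.verts.card)
    (φ : ℕ → Fin 3) (hφ : (D.induce R).IsDicol φ)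
    (x : Fin 3 → ℕ) (D' : Dgr) (hident : D.IsIdent R φ x D') :
    ¬ D'.Dicolourable 3 := by
  rintro ⟨ψ, hψ⟩
  obtain ⟨hxinj, hxout, hverts, hAdj⟩ := hident
  -- the colours of the x i are pairwise distinct
  have hψx : ∀ i j : Fin 3, i ≠ j → ψ (x i) ≠ ψ (x j) := by
    intro i j hij heq
    have h1 : D'.Adj (x i) (x j) :=
      (hAdj _ _).2 (Or.inr (Or.inr (Or.inr ⟨i, j, hij, rfl, rfl⟩)))
    have h2 : D'.Adj (x j) (x i) :=
      (hAdj _ _).2 (Or.inr (Or.inr (Or.inr ⟨j, i, hij.symm, rfl, rfl⟩)))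
    exact hψ (x i) ((Relation.TransGen.single ⟨h1, heq⟩).tail ⟨h2, heq.symm⟩)
  classical
  set σ : ℕ → Fin 3 := fun v => if v ∈ R then ψ (x (φ v)) else ψ v with hσ
  set f : ℕ → ℕ := fun v => if v ∈ R then x (φ v) else v with hf
  have hψf : ∀ v, ψ (f v) = σ v := by
    intro v; by_cases h : v ∈ R <;> simp [hf, hσ, h]
  set r : ℕ → ℕ → Prop := fun u v => D.Adj u v ∧ σ u = σ v with hr
  set r' : ℕ → ℕ → Prop := fun u v => D'.Adj u v ∧ ψ u = ψ v with hr'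
  have hφeq : ∀ a c, a ∈ R → c ∈ R → σ a = σ c → φ a = φ c := by
    intro a c haR hcR hσeq
    by_contra hne
    exact hψx _ _ hne (by simpa [hσ, haR, hcR] using hσeq)
  have key : ∀ a c, D.Adj a c → σ a = σ c → (a ∉ R ∨ c ∉ R) → r' (f a) (f c) := by
    intro a c hadj hσeq hnot
    refine ⟨?_, by rw [hψf, hψf, hσeq]⟩
    by_cases haR : a ∈ R <;> by_cases hcR : c ∈ R
    · tauto
    · simp only [hf, if_pos haR, if_neg hcR]
      exact (hAdj _ _).2 (Or.inr (Or.inl ⟨φ a, rfl, hcR, a, haR, rfl, hadj⟩))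
    · simp only [hf, if_neg haR, if_pos hcR]
      exact (hAdj _ _).2 (Or.inr (Or.inr (Or.inl ⟨φ c, rfl, haR, c, hcR, rfl, hadj⟩)))
    · simp only [hf, if_neg haR, if_neg hcR]
      exact (hAdj _ _).2 (Or.inl ⟨hadj, haR, hcR⟩)
  have step : ∀ a c, r a c → Relation.ReflTransGen r' (f a) (f c) := by
    rintro a c ⟨hadj, hσeq⟩
    by_cases haR : a ∈ R <;> by_cases hcR : c ∈ R
    · have : φ a = φ c := hφeq a c haR hcR hσeq
      simp only [hf, if_pos haR, if_pos hcR, this]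
      exact Relation.ReflTransGen.refl
    · exact Relation.ReflTransGen.single (key a c hadj hσeq (Or.inr hcR))
    · exact Relation.ReflTransGen.single (key a c hadj hσeq (Or.inl haR))
    · exact Relation.ReflTransGen.single (key a c hadj hσeq (Or.inl haR))
  have hmap : ∀ a c, Relation.ReflTransGen r a c →
      Relation.ReflTransGen r' (f a) (f c) := by
    intro a c h
    induction h with
    | refl => exact Relation.ReflTransGen.refl
    | tail _ hde ih => exact ih.trans (step _ _ hde)
  -- σ is a 3-dicolouring of D
  have hcol : D.IsDicol σ := by
    intro v hv
    rcases split_cycle (fun v => v ∈ R) hv with h1 | ⟨w, hwR, hvw, hwv⟩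
    · refine hφ v (Relation.TransGen.mono ?_ _ _ h1)
      rintro a c ⟨⟨hadj, hσeq⟩, haR, hcR⟩
      exact ⟨⟨hadj, haR, hcR⟩, hφeq a c haR hcR hσeq⟩
    · have hww : Relation.TransGen r w w := by
        rcases Relation.ReflTransGen.cases_head hvw with heq | ⟨d, hvd, hdw⟩
        · exact heq ▸ hv
        · exact Relation.TransGen.trans_right hwv (Relation.TransGen.head' hvd hdw)
      obtain ⟨b, hwb, hbw⟩ := Relation.TransGen.head'_iff.1 hww
      have hfw : f w = w := by simp [hf, hwR]
      have e1 : r' w (f b) := by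
        have := key w b hwb.1 hwb.2 (Or.inl hwR)
        rwa [hfw] at this
      have e2 : Relation.ReflTransGen r' (f b) w := by
        have := hmap b w hbw
        rwa [hfw] at this
      exact hψ w (Relation.TransGen.head' e1 e2)
  have h3 : D.dichr ≤ 3 := Nat.sInf_le ⟨σ, hcol⟩
  rw [hD.1] at h3
  omega
end
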